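/- arXiv:2301.09880 — 4 statements merged into one kernel-verified Lean document; each statement's English description precedes it below -/
import Mathlib

section
/- Let C be a nonempty closed convex subset of a finite-dimensional real inner product space E, and let Φ : E → ℝ be differentiable with L-Lipschitz gradient. Fix η > 0, s ∈ C and g ∈ E, and set δ = g − ∇Φ(s), p = P_C(s − η·g), Ĝ = (s − p)/η, and G = (s − P_C(s − η·∇Φ(s)))/η. Then Φ(p) ≤ Φ(s) − (η − Lη²/2)·‖Ĝ‖² + η·⟪δ, G⟫ + η·‖δ‖². -/
open RealInnerProductSpace

private lemma var_ineq' {E : Type*} [NormedAddCommGroup E] [InnerProductSpace ℝ E]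
    {C : Set E} (hCco : Convex ℝ C) (proj : E → E)
    (hprojC : ∀ x, proj x ∈ C) (hproj : ∀ x, ∀ c ∈ C, ‖x - proj x‖ ≤ ‖x - c‖)
    (x : E) : ∀ c ∈ C, ⟪x - proj x, c - proj x⟫ ≤ 0 := by
  have hinf : ‖x - proj x‖ = ⨅ w : C, ‖x - w‖ := by
    letI : Nonempty C := ⟨⟨proj x, hprojC x⟩⟩
    apply le_antisymm
    · exact le_ciInf fun w => hproj x w w.2
    · have hbdd : BddBelow (Set.range fun w : C => ‖x - w‖) :=
        ⟨0, by rintro _ ⟨w, rfl⟩; exact norm_nonneg _⟩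
      exact ciInf_le hbdd ⟨proj x, hprojC x⟩
  exact (norm_eq_iInf_iff_real_inner_le_zero hCco (hprojC x)).1 hinf

private lemma nonexp' {E : Type*} [NormedAddCommGroup E] [InnerProductSpace ℝ E]
    {C : Set E} (hCco : Convex ℝ C) (proj : E → E)
    (hprojC : ∀ x, proj x ∈ C) (hproj : ∀ x, ∀ c ∈ C, ‖x - proj x‖ ≤ ‖x - c‖)
    (x y : E) : ‖proj x - proj y‖ ≤ ‖x - y‖ := by
  set a := proj x
  set b := proj y
  have h1 : ⟪x - a, b - a⟫ ≤ 0 := var_ineq' hCco proj hprojC hproj x b (hprojC y)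
  have h2 : ⟪y - b, a - b⟫ ≤ 0 := var_ineq' hCco proj hprojC hproj y a (hprojC x)
  have e : ⟪x - a, b - a⟫ + ⟪y - b, a - b⟫ = ⟪x - y, b - a⟫ + ‖b - a‖ ^ 2 := by
    rw [← real_inner_self_eq_norm_sq]
    simp only [inner_sub_left, inner_sub_right]
    linarith [real_inner_comm a b]
  have key : ‖b - a‖ ^ 2 ≤ ⟪y - x, b - a⟫ := by
    have : ⟪y - x, b - a⟫ = -⟪x - y, b - a⟫ := by
      rw [show y - x = -(x - y) by abel, inner_neg_left]
    linarith
  have hc : ⟪y - x, b - a⟫ ≤ ‖y - x‖ * ‖b - a‖ := real_inner_le_norm _ _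
  rw [show ‖a - b‖ = ‖b - a‖ from norm_sub_rev _ _, show ‖x - y‖ = ‖y - x‖ from norm_sub_rev _ _]
  rcases eq_or_lt_of_le (norm_nonneg (b - a)) with h0 | h0
  · rw [← h0]; exact norm_nonneg _
  · nlinarith

private lemma descent' {E : Type*} [NormedAddCommGroup E] [InnerProductSpace ℝ E]
    [CompleteSpace E]
    (Φ : E → ℝ) (L : ℝ) (hΦ : Differentiable ℝ Φ)
    (hLip : ∀ x y, ‖gradient Φ x - gradient Φ y‖ ≤ L * ‖x - y‖) (x y : E) :
    Φ y ≤ Φ x + ⟪gradient Φ x, y - x⟫ + L / 2 * ‖y - x‖ ^ 2 := by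
  set v := y - x with hv
  set c₁ := ⟪gradient Φ x, v⟫ with hc₁
  set f : ℝ → ℝ := fun t => Φ (x + t • v) - t * c₁ - (L / 2 * ‖v‖ ^ 2) * t ^ 2 with hf
  have hline : ∀ t : ℝ, HasDerivAt (fun t : ℝ => x + t • v) v t := by
    intro t
    simpa using ((hasDerivAt_id t).smul_const v).const_add x
  have hΦd : ∀ t : ℝ, HasDerivAt (fun t : ℝ => Φ (x + t • v))
      ⟪gradient Φ (x + t • v), v⟫ t := by
    intro t
    have h1 := (hΦ (x + t • v)).hasGradientAt
    have h2 := h1.hasFDerivAt.comp_hasDerivAt t (hline t)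
    exact h2
  have hfd : ∀ t : ℝ, HasDerivAt f
      (⟪gradient Φ (x + t • v), v⟫ - c₁ - (L / 2 * ‖v‖ ^ 2) * (2 * t)) t := by
    intro t
    have h1 : HasDerivAt (fun t : ℝ => t * c₁) c₁ t := by
      simpa using (hasDerivAt_id t).mul_const c₁
    have h2 : HasDerivAt (fun t : ℝ => (L / 2 * ‖v‖ ^ 2) * t ^ 2)
        ((L / 2 * ‖v‖ ^ 2) * (2 * t)) t := by
      simpa using (hasDerivAt_pow 2 t).const_mul (L / 2 * ‖v‖ ^ 2)
    exact ((hΦd t).sub h1).sub h2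
  have hmono : AntitoneOn f (Set.Icc 0 1) := by
    apply antitoneOn_of_deriv_nonpos (convex_Icc 0 1)
    · exact fun t _ => ((hfd t).continuousAt).continuousWithinAt
    · exact fun t _ => ((hfd t).differentiableAt).differentiableWithinAt
    · intro t ht
      rw [interior_Icc] at ht
      rw [(hfd t).deriv]
      have hC : ⟪gradient Φ (x + t • v) - gradient Φ x, v⟫
          ≤ ‖gradient Φ (x + t • v) - gradient Φ x‖ * ‖v‖ := real_inner_le_norm _ _
      have hL : ‖gradient Φ (x + t • v) - gradient Φ x‖ ≤ L * (t * ‖v‖) := by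
        have := hLip (x + t • v) x
        rwa [add_sub_cancel_left, norm_smul, Real.norm_eq_abs, abs_of_pos ht.1] at this
      rw [inner_sub_left] at hC
      have hv0 : (0:ℝ) ≤ ‖v‖ := norm_nonneg _
      nlinarith [ht.1.le]
  have h01 : f 1 ≤ f 0 := hmono (by norm_num) (by norm_num) (by norm_num)
  simp only [hf, one_smul, zero_smul, add_zero, one_pow, mul_one, zero_mul] at h01
  rw [show x + v = y by rw [hv]; abel] at h01
  norm_num at h01
  linarith

/-- Descent-type inequality for a single projected step with an inexact gradient `g`:
`Φ(p) ≤ Φ(s) − (η − Lη²/2)‖Ĝ‖² + η⟪δ, G⟫ + η‖δ‖²`, where `δ = g − ∇Φ(s)`,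
`p = P_C(s − η g)`, `Ĝ = (s − p)/η`, `G = (s − P_C(s − η ∇Φ(s)))/η`. -/
theorem descent_inequality_projected_step
    {E : Type*} [NormedAddCommGroup E] [InnerProductSpace ℝ E] [FiniteDimensional ℝ E]
    (C : Set E) (hCne : C.Nonempty) (hCcl : IsClosed C) (hCco : Convex ℝ C)
    (proj : E → E)
    (hprojC : ∀ x, proj x ∈ C) (hproj : ∀ x, ∀ c ∈ C, ‖x - proj x‖ ≤ ‖x - c‖)
    (Φ : E → ℝ) (L : ℝ) (hΦ : Differentiable ℝ Φ)
    (hLip : ∀ x y, ‖gradient Φ x - gradient Φ y‖ ≤ L * ‖x - y‖)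
    (η : ℝ) (hη : 0 < η) (s : E) (hsC : s ∈ C) (g : E) :
    Φ (proj (s - η • g)) ≤
      Φ s - (η - L * η ^ 2 / 2) * ‖η⁻¹ • (s - proj (s - η • g))‖ ^ 2
        + η * ⟪g - gradient Φ s, η⁻¹ • (s - proj (s - η • gradient Φ s))⟫
        + η * ‖g - gradient Φ s‖ ^ 2 := by
  set p := proj (s - η • g) with hp
  set q := proj (s - η • gradient Φ s) with hq
  set δ := g - gradient Φ s with hδ
  -- descent lemma
  have hdesc := descent' Φ L hΦ hLip s p
  -- variational inequality at s - η•g, with c = s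
  have hvar := var_ineq' hCco proj hprojC hproj (s - η • g) s hsC
  rw [← hp, show s - η • g - p = (s - p) - η • g by abel] at hvar
  rw [inner_sub_left, real_inner_smul_left, real_inner_self_eq_norm_sq] at hvar
  -- nonexpansiveness
  have hnon := nonexp' hCco proj hprojC hproj (s - η • g) (s - η • gradient Φ s)
  rw [← hp, ← hq] at hnon
  have hdiff : (s - η • g) - (s - η • gradient Φ s) = -(η • δ) := by
    rw [hδ, smul_sub]; abel
  rw [hdiff, norm_neg, norm_smul, Real.norm_eq_abs, abs_of_pos hη] at hnon
  -- Cauchy–Schwarz for ⟪δ, q - p⟫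
  have hcs : ⟪δ, q - p⟫ ≤ ‖δ‖ * ‖p - q‖ := by
    calc ⟪δ, q - p⟫ ≤ ‖δ‖ * ‖q - p‖ := real_inner_le_norm _ _
    _ = ‖δ‖ * ‖p - q‖ := by rw [norm_sub_rev q p]
  -- rewrite goal norms/inners
  have hns : ‖η⁻¹ • (s - p)‖ ^ 2 = η⁻¹ ^ 2 * ‖s - p‖ ^ 2 := by
    rw [norm_smul, Real.norm_eq_abs, abs_of_pos (inv_pos.mpr hη), mul_pow]
  have hni : ⟪δ, η⁻¹ • (s - q)⟫ = η⁻¹ * ⟪δ, s - q⟫ := real_inner_smul_right _ _ _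
  rw [hns, hni]
  -- decompose the gradient inner product
  have hgrad : ⟪gradient Φ s, p - s⟫ = -⟪g, s - p⟫ + ⟪δ, s - q⟫ + ⟪δ, q - p⟫ := by
    have h1 : gradient Φ s = g - δ := by rw [hδ]; abel
    have h2 : ⟪δ, s - q⟫ + ⟪δ, q - p⟫ = ⟪δ, s - p⟫ := by
      rw [← inner_add_right]; congr 1; abel
    rw [h1, inner_sub_left, show p - s = -(s - p) by abel, inner_neg_right, inner_neg_right]
    linarith [h2]
  rw [show ‖p - s‖ = ‖s - p‖ from norm_sub_rev _ _, hgrad] at hdesc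
  -- field identities
  have hinv : η * η⁻¹ = 1 := mul_inv_cancel₀ hη.ne'
  have e1 : (η - L * η ^ 2 / 2) * (η⁻¹ ^ 2 * ‖s - p‖ ^ 2)
      = η⁻¹ * ‖s - p‖ ^ 2 - L / 2 * ‖s - p‖ ^ 2 := by
    field_simp
  have e2 : η * (η⁻¹ * ⟪δ, s - q⟫) = ⟪δ, s - q⟫ := by
    rw [← mul_assoc, hinv, one_mul]
  rw [e1, e2]
  -- from hvar: η⁻¹ * ‖s-p‖^2 ≤ ⟪g, s - p⟫
  have hvar' : η⁻¹ * ‖s - p‖ ^ 2 ≤ ⟪g, s - p⟫ := by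
    rw [← sub_nonpos]
    have := mul_nonpos_of_nonneg_of_nonpos (le_of_lt (inv_pos.mpr hη)) hvar
    calc η⁻¹ * ‖s - p‖ ^ 2 - ⟪g, s - p⟫
        = η⁻¹ * (‖s - p‖ ^ 2 - η * ⟪g, s - p⟫) + (η⁻¹ * η - 1) * ⟪g, s - p⟫ := by ring
      _ ≤ 0 := by rw [inv_mul_cancel₀ hη.ne']; simpa using this
  have hδn : (0:ℝ) ≤ ‖δ‖ := norm_nonneg _
  nlinarith [hcs, hnon, hδn]
end

section
/- Let (Ω, ℱ, P) be a probability space with filtration (ℱ_t), let C be a nonempty closed convex subset of a finite-dimensional real inner product space E, and let Φ : E → ℝ be differentiable with L-Lipschitz gradient and bounded below by Φ*. Let 0 < η < 1/L, and let random iterates s^t (ℱ_t-measurable, valued in C) and stochastic gradients g^t (ℱ_{t+1}-measurable, square-integrable) satisfy s^{t+1} = P_C(s^t − η·g^t), E[g^t | ℱ_t] = ∇Φ(s^t) almost surely, and E‖g^t − ∇Φ(s^t)‖² ≤ σ² for t = 1, …, T, where s¹ is deterministic. Define Ĝ^t = (s^t − s^{t+1})/η. Then (1/T)·Σ_{t=1}^{T}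 E‖Ĝ^t‖² ≤ (Φ(s¹) − Φ*)/(η·(1 − Lη/2)·T) + σ²/(1 − Lη/2). -/
open MeasureTheory RealInnerProductSpace

section ProjAux
variable {E : Type*} [NormedAddCommGroup E] [InnerProductSpace ℝ E]

private lemma my_proj_inner_le_zero {C : Set E} (hCco : Convex ℝ C)
    {proj : E → E} (hprojC : ∀ x, proj x ∈ C) (hproj : ∀ x, ∀ c ∈ C, ‖x - proj x‖ ≤ ‖x - c‖)
    (x : E) {c : E} (hc : c ∈ C) : ⟪x - proj x, c - proj x⟫ ≤ 0 := by
  haveI : Nonempty C := ⟨⟨proj x, hprojC x⟩⟩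
  have h : ‖x - proj x‖ = ⨅ w : C, ‖x - w‖ := by
    apply le_antisymm
    · exact le_ciInf fun w => hproj x w w.2
    · have hbdd : BddBelow (Set.range fun w : C => ‖x - w‖) :=
        ⟨0, by rintro r ⟨w, rfl⟩; exact norm_nonneg _⟩
      exact ciInf_le hbdd ⟨proj x, hprojC x⟩
  exact (norm_eq_iInf_iff_real_inner_le_zero hCco (hprojC x)).mp h c hc

private lemma my_proj_self {C : Set E} {proj : E → E}
    (hproj : ∀ x, ∀ c ∈ C, ‖x - proj x‖ ≤ ‖x - c‖) {c : E} (hc : c ∈ C) : proj c = c := by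
  have := hproj c c hc
  simp only [sub_self, norm_zero] at this
  have h0 : ‖c - proj c‖ = 0 := le_antisymm this (norm_nonneg _)
  have := norm_eq_zero.mp h0
  have := sub_eq_zero.mp this
  exact this.symm

private lemma my_proj_nonexpansive {C : Set E} (hCco : Convex ℝ C)
    {proj : E → E} (hprojC : ∀ x, proj x ∈ C) (hproj : ∀ x, ∀ c ∈ C, ‖x - proj x‖ ≤ ‖x - c‖)
    (a b : E) : ‖proj a - proj b‖ ≤ ‖a - b‖ := by
  have h1 := my_proj_inner_le_zero hCco hprojC hproj a (hprojC b)
  have h2 := my_proj_inner_le_zero hCco hprojC hproj b (hprojC a)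
  set u := proj a - proj b with hu
  have e : ‖u‖ ^ 2 = ⟪u, u⟫ := (real_inner_self_eq_norm_sq u).symm
  have expand : ⟪u, u⟫ = (⟪a - b, u⟫) - ⟪a - proj a, u⟫ + ⟪b - proj b, u⟫ := by
    simp only [hu, inner_sub_left, inner_sub_right]
    ring
  have hh1 : 0 ≤ ⟪a - proj a, u⟫ := by
    have : ⟪a - proj a, proj b - proj a⟫ = -⟪a - proj a, u⟫ := by
      rw [hu, ← inner_neg_right, neg_sub]
    linarith [h1, this.symm.le, this.le]
  have hh2 : ⟪b - proj b, u⟫ ≤ 0 := h2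
  have key : ‖u‖ ^ 2 ≤ ⟪a - b, u⟫ := by
    rw [e, expand]; linarith
  have hcs : ⟪a - b, u⟫ ≤ ‖a - b‖ * ‖u‖ := real_inner_le_norm _ _
  by_cases h : ‖u‖ = 0
  · rw [h]; exact norm_nonneg _
  · have hu0 : 0 < ‖u‖ := lt_of_le_of_ne (norm_nonneg u) (Ne.symm h)
    nlinarith

end ProjAux

section DescentAux
variable {E : Type*} [NormedAddCommGroup E] [InnerProductSpace ℝ E] [CompleteSpace E]

private lemma my_descent {Φ : E → ℝ} {L : ℝ} (hΦ : Differentiable ℝ Φ)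
    (hLip : ∀ x y, ‖gradient Φ x - gradient Φ y‖ ≤ L * ‖x - y‖) (x y : E) :
    Φ y ≤ Φ x + ⟪gradient Φ x, y - x⟫ + L / 2 * ‖y - x‖ ^ 2 := by
  set v := y - x with hv
  set f : ℝ → ℝ := fun τ => Φ (x + τ • v) - τ * ⟪gradient Φ x, v⟫ - L * τ ^ 2 / 2 * ‖v‖ ^ 2
    with hf
  have hline : ∀ τ : ℝ, HasDerivAt (fun τ : ℝ => x + τ • v) v τ := fun τ => by
    simpa using ((hasDerivAt_id τ).smul_const v).const_add x
  have hd : ∀ τ : ℝ, HasDerivAt f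
      (⟪gradient Φ (x + τ • v), v⟫ - ⟪gradient Φ x, v⟫ - L * τ * ‖v‖ ^ 2) τ := by
    intro τ
    have h1 : HasDerivAt (fun τ : ℝ => Φ (x + τ • v)) (⟪gradient Φ (x + τ • v), v⟫) τ := by
      have hg := (hΦ (x + τ • v)).hasGradientAt.hasFDerivAt
      have := hg.comp_hasDerivAt τ (hline τ)
      rw [InnerProductSpace.toDual_apply_apply] at this
      exact this
    have h2 : HasDerivAt (fun τ : ℝ => τ * ⟪gradient Φ x, v⟫) (⟪gradient Φ x, v⟫) τ := by
      simpa using (hasDerivAt_id τ).mul_const (⟪gradient Φ x, v⟫)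
    have h3 : HasDerivAt (fun τ : ℝ => L * τ ^ 2 / 2 * ‖v‖ ^ 2) (L * τ * ‖v‖ ^ 2) τ := by
      have := (hasDerivAt_pow 2 τ).const_mul (L / 2)
      have h4 := this.mul_const (‖v‖ ^ 2)
      have h5 : (fun y : ℝ => L / 2 * y ^ 2 * ‖v‖ ^ 2) = (fun τ : ℝ => L * τ ^ 2 / 2 * ‖v‖ ^ 2) := by
        funext τ'; ring
      rw [h5] at h4
      exact h4.congr_deriv (by rw [show (2:ℕ) - 1 = 1 from rfl, pow_one]; push_cast; ring)
    exact (h1.sub h2).sub h3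
  have hmono : AntitoneOn f (Set.Icc 0 1) := by
    apply antitoneOn_of_deriv_nonpos (convex_Icc 0 1)
    · exact (fun τ _ => ((hd τ).differentiableAt).continuousAt.continuousWithinAt)
    · exact fun τ _ => ((hd τ).differentiableAt).differentiableWithinAt
    · intro τ hτ
      rw [interior_Icc, Set.mem_Ioo] at hτ
      rw [(hd τ).deriv]
      have hsub : ⟪gradient Φ (x + τ • v), v⟫ - ⟪gradient Φ x, v⟫
          = ⟪gradient Φ (x + τ • v) - gradient Φ x, v⟫ := (inner_sub_left _ _ _).symm
      rw [hsub]
      have hcs : ⟪gradient Φ (x + τ • v) - gradient Φ x, v⟫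
          ≤ ‖gradient Φ (x + τ • v) - gradient Φ x‖ * ‖v‖ := real_inner_le_norm _ _
      have hlip := hLip (x + τ • v) x
      have hnorm : ‖x + τ • v - x‖ = τ * ‖v‖ := by
        rw [add_sub_cancel_left, norm_smul, Real.norm_eq_abs, abs_of_pos hτ.1]
      rw [hnorm] at hlip
      nlinarith [norm_nonneg v, norm_nonneg (gradient Φ (x + τ • v) - gradient Φ x)]
  have h01 := hmono (Set.mem_Icc.2 ⟨le_refl 0, zero_le_one⟩)
    (Set.mem_Icc.2 ⟨zero_le_one, le_refl 1⟩) zero_le_one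
  have hf0 : f 0 = Φ x := by simp [hf]
  have hf1 : f 1 = Φ y - ⟪gradient Φ x, v⟫ - L / 2 * ‖v‖ ^ 2 := by
    have h : x + (1 : ℝ) • v = y := by rw [one_smul, hv]; abel
    rw [hf]
    simp only [h, one_pow, one_mul]
    ring
  rw [hf0, hf1] at h01
  linarith

end DescentAux

section MTAux
variable {E : Type*} [NormedAddCommGroup E] [InnerProductSpace ℝ E]
variable {Ω : Type*} {mΩ : MeasurableSpace Ω} {P : Measure Ω}

private lemma my_integrable_inner {f g : Ω → E}
    (hf : MemLp f 2 P) (hg : MemLp g 2 P) :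
    Integrable (fun ω => ⟪f ω, g ω⟫) P := by
  have h := MeasureTheory.L2.integrable_inner (𝕜 := ℝ) (hf.toLp f) (hg.toLp g)
  refine h.congr ?_
  filter_upwards [hf.coeFn_toLp, hg.coeFn_toLp] with ω h1 h2
  rw [h1, h2]

private lemma my_integrable_mul {f g : Ω → ℝ} (hf : MemLp f 2 P) (hg : MemLp g 2 P) :
    Integrable (fun ω => f ω * g ω) P := by
  have h := my_integrable_inner (E := ℝ) hf hg
  refine h.congr (Filter.Eventually.of_forall fun ω => ?_)
  simp [real_inner_comm]; ring

private lemma my_integral_inner_condexp_zero [FiniteDimensional ℝ E]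
    {Ω' : Type*} {m mΩ' : MeasurableSpace Ω'} {P : Measure Ω'} [IsProbabilityMeasure P]
    (hm : m ≤ mΩ') {X Y : Ω' → E}
    (hXm : StronglyMeasurable[m] X) (hX2 : MemLp X 2 P) (hY2 : MemLp Y 2 P)
    (hY : P[Y|m] =ᵐ[P] 0) : ∫ ω, ⟪X ω, Y ω⟫ ∂P = 0 := by
  have hYint : Integrable Y P := hY2.integrable one_le_two
  set b := stdOrthonormalBasis ℝ E with hb
  have hterm : ∀ i, Integrable (fun ω => ⟪X ω, b i⟫ * ⟪b i, Y ω⟫) P := fun i =>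
    my_integrable_mul (hX2.inner_const (b i)) (hY2.const_inner (b i))
  have hzero : ∀ i, ∫ ω, ⟪X ω, b i⟫ * ⟪b i, Y ω⟫ ∂P = 0 := by
    intro i
    have hYi_int : Integrable (fun ω => ⟪b i, Y ω⟫) P := hYint.const_inner (b i)
    have hcYi : P[(fun ω => ⟪b i, Y ω⟫)|m] =ᵐ[P] 0 := by
      have h0 : (fun _ : Ω' => (0 : ℝ)) =ᵐ[P] P[(fun ω => ⟪b i, Y ω⟫)|m] := by
        refine ae_eq_condExp_of_forall_setIntegral_eq hm hYi_int
          (fun s _ _ => ((integrable_const (0 : ℝ) : Integrable _ P)).integrableOn)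
          (fun A hA hAfin => ?_)
          (StronglyMeasurable.aestronglyMeasurable (@stronglyMeasurable_const Ω' ℝ m _ 0))
        have hYA : ∫ ω in A, Y ω ∂P = 0 := by
          rw [← setIntegral_condExp (μ := P) hm hYint hA]
          calc ∫ ω in A, (P[Y|m]) ω ∂P = ∫ _ω in A, (0 : E) ∂P :=
                setIntegral_congr_ae (μ := P) (hm A hA) (hY.mono fun ω hω _ => hω)
            _ = 0 := by simp
        have h1 : ∫ ω in A, ⟪b i, Y ω⟫ ∂P = 0 := by
          rw [integral_inner (μ := P.restrict A) hYint.integrableOn (b i), hYA,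
            inner_zero_right]
        simp [h1]
      exact h0.symm
    have hXi : StronglyMeasurable[m] fun ω => ⟪X ω, b i⟫ :=
      hXm.inner (@stronglyMeasurable_const Ω' E m _ (b i))
    have hmul : P[(fun ω => ⟪X ω, b i⟫) * (fun ω => ⟪b i, Y ω⟫)|m]
        =ᵐ[P] (fun ω => ⟪X ω, b i⟫) * P[(fun ω => ⟪b i, Y ω⟫)|m] :=
      condExp_mul_of_stronglyMeasurable_left hXi (hterm i) hYi_int
    have hcz : P[(fun ω => ⟪X ω, b i⟫) * (fun ω => ⟪b i, Y ω⟫)|m] =ᵐ[P] 0 := by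
      refine hmul.trans ?_
      filter_upwards [hcYi] with ω hω
      simp only [Pi.mul_apply, hω, Pi.zero_apply, mul_zero]
    calc ∫ ω, ⟪X ω, b i⟫ * ⟪b i, Y ω⟫ ∂P
        = ∫ ω, (P[(fun ω => ⟪X ω, b i⟫) * (fun ω => ⟪b i, Y ω⟫)|m]) ω ∂P :=
          (integral_condExp (μ := P) (f := (fun ω => ⟪X ω, b i⟫) * fun ω => ⟪b i, Y ω⟫)
            hm).symm
      _ = ∫ _ω, (0 : ℝ) ∂P := integral_congr_ae hcz
      _ = 0 := by simp
  calc ∫ ω, ⟪X ω, Y ω⟫ ∂P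
      = ∫ ω, ∑ i, ⟪X ω, b i⟫ * ⟪b i, Y ω⟫ ∂P := by
        refine integral_congr_ae (Filter.Eventually.of_forall fun ω => ?_)
        exact (b.sum_inner_mul_inner (X ω) (Y ω)).symm
    _ = ∑ i, ∫ ω, ⟪X ω, b i⟫ * ⟪b i, Y ω⟫ ∂P := integral_finset_sum _ fun i _ => hterm i
    _ = 0 := by simp [hzero]

end MTAux

section StepAux
variable {E : Type*} [NormedAddCommGroup E] [InnerProductSpace ℝ E] [CompleteSpace E]

private lemma my_step {Φ : E → ℝ} {L η : ℝ} (hη0 : 0 < η)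
    (hdes : ∀ x y : E, Φ y ≤ Φ x + ⟪gradient Φ x, y - x⟫ + L / 2 * ‖y - x‖ ^ 2)
    (a gv a' p : E)
    (hi : ⟪a - η • gv - a', a - a'⟫ ≤ 0)
    (hiii : ‖p - a'‖ ≤ η * ‖gv - gradient Φ a‖) :
    η * (1 - L * η / 2) * ‖η⁻¹ • (a - a')‖ ^ 2
      ≤ Φ a - Φ a'
        + η * (⟪η⁻¹ • (a - p), gv - gradient Φ a⟫ + ‖gv - gradient Φ a‖ ^ 2) := by
  set dv := gradient Φ a with hdv
  set u := a - a' with hu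
  set w := a - p with hw
  set δv := gv - dv with hδv
  have hηne : η ≠ 0 := ne_of_gt hη0
  have h1 : ‖u‖ ^ 2 ≤ η * ⟪gv, u⟫ := by
    have hexp : ⟪a - η • gv - a', a - a'⟫ = ‖u‖ ^ 2 - η * ⟪gv, u⟫ := by
      rw [hu, sub_right_comm, inner_sub_left, real_inner_smul_left,
        real_inner_self_eq_norm_sq]
    linarith [hexp ▸ hi]
  have h2 : Φ a' ≤ Φ a - ⟪dv, u⟫ + L / 2 * ‖u‖ ^ 2 := by
    have := hdes a a'
    have he1 : a' - a = -u := by rw [hu]; abel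
    rw [he1, inner_neg_right, norm_neg] at this
    linarith
  have h3 : ⟪δv, u - w⟫ ≤ η * ‖δv‖ ^ 2 := by
    have huw : u - w = p - a' := by rw [hu, hw]; abel
    rw [huw]
    have hcs : ⟪δv, p - a'⟫ ≤ ‖δv‖ * ‖p - a'‖ := real_inner_le_norm _ _
    nlinarith [norm_nonneg δv, mul_le_mul_of_nonneg_left hiii (norm_nonneg δv)]
  have h4 : ⟪dv, u⟫ = ⟪gv, u⟫ - ⟪δv, w⟫ - ⟪δv, u - w⟫ := by
    simp only [hδv, inner_sub_left, inner_sub_right]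
    ring
  have h1' : η⁻¹ * ‖u‖ ^ 2 ≤ ⟪gv, u⟫ := by
    rw [inv_mul_le_iff₀ hη0]
    exact h1
  have e1 : ‖η⁻¹ • u‖ ^ 2 = η⁻¹ ^ 2 * ‖u‖ ^ 2 := by
    rw [norm_smul, Real.norm_eq_abs, abs_of_pos (inv_pos.2 hη0), mul_pow]
  have e2 : ⟪η⁻¹ • w, δv⟫ = η⁻¹ * ⟪δv, w⟫ := by
    rw [real_inner_smul_left, real_inner_comm]
  rw [e1, e2]
  have e3 : η * (1 - L * η / 2) * (η⁻¹ ^ 2 * ‖u‖ ^ 2)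
      = η⁻¹ * ‖u‖ ^ 2 - L / 2 * ‖u‖ ^ 2 := by
    field_simp
  have e4 : η * (η⁻¹ * ⟪δv, w⟫ + ‖δv‖ ^ 2) = ⟪δv, w⟫ + η * ‖δv‖ ^ 2 := by
    rw [mul_add, ← mul_assoc, mul_inv_cancel₀ hηne, one_mul]
  rw [e3, e4]
  linarith

end StepAux

private lemma my_telescope (n : ℕ) (f : ℕ → ℝ) :
    ∑ t ∈ Finset.Icc 1 n, (f t - f (t + 1)) = f 1 - f (n + 1) := by
  induction n with
  | zero => simp
  | succ k ih =>
    rw [Finset.sum_Icc_succ_top (by omega), ih]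
    ring

/-- Convergence bound for projected stochastic gradient descent:
`(1/T) Σ_{t=1}^{T} E‖Ĝ^t‖² ≤ (Φ(s¹) − Φ*)/(η(1 − Lη/2)T) + σ²/(1 − Lη/2)`,
where `Ĝ^t = (s^t − s^{t+1})/η`. -/
theorem psgd_expected_gradient_mapping_bound
    {E : Type*} [NormedAddCommGroup E] [InnerProductSpace ℝ E] [FiniteDimensional ℝ E]
    {Ω : Type*} {mΩ : MeasurableSpace Ω} (P : Measure Ω) [IsProbabilityMeasure P]
    (ℱ : Filtration ℕ mΩ)
    (C : Set E) (hCne : C.Nonempty) (hCcl : IsClosed C) (hCco : Convex ℝ C)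
    (proj : E → E)
    (hprojC : ∀ x, proj x ∈ C) (hproj : ∀ x, ∀ c ∈ C, ‖x - proj x‖ ≤ ‖x - c‖)
    (Φ : E → ℝ) (L Φstar : ℝ) (hΦ : Differentiable ℝ Φ)
    (hLip : ∀ x y, ‖gradient Φ x - gradient Φ y‖ ≤ L * ‖x - y‖)
    (hbdd : ∀ x, Φstar ≤ Φ x)
    (η : ℝ) (hL : 0 < L) (hη0 : 0 < η) (hηL : η < 1 / L)
    (σ : ℝ) (T : ℕ) (hT : 1 ≤ T)
    (s g : ℕ → Ω → E)
    (hsmeas : ∀ t, StronglyMeasurable[ℱ t] (s t))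
    (hsC : ∀ t ω, s t ω ∈ C)
    (hgmeas : ∀ t, StronglyMeasurable[ℱ (t + 1)] (g t))
    (hgL2 : ∀ t, MemLp (g t) 2 P)
    (hupdate : ∀ t ∈ Finset.Icc 1 T, ∀ ω, s (t + 1) ω = proj (s t ω - η • g t ω))
    (hcond : ∀ t ∈ Finset.Icc 1 T, P[g t|ℱ t] =ᵐ[P] fun ω => gradient Φ (s t ω))
    (hvar : ∀ t ∈ Finset.Icc 1 T, ∫ ω, ‖g t ω - gradient Φ (s t ω)‖ ^ 2 ∂P ≤ σ ^ 2)
    (s₁ : E) (hs1 : ∀ ω, s 1 ω = s₁) :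
    (1 / (T : ℝ)) * ∑ t ∈ Finset.Icc 1 T, ∫ ω, ‖η⁻¹ • (s t ω - s (t + 1) ω)‖ ^ 2 ∂P
      ≤ (Φ s₁ - Φstar) / (η * (1 - L * η / 2) * T) + σ ^ 2 / (1 - L * η / 2) := by
  classical
  obtain ⟨c₀, hc₀⟩ := hCne
  have hηne : η ≠ 0 := ne_of_gt hη0
  have hLη : L * η < 1 := by
    have h := (lt_div_iff₀ hL).mp hηL
    nlinarith
  have hB : 0 < 1 - L * η / 2 := by linarith
  have hTpos : (0 : ℝ) < T := by exact_mod_cast Nat.lt_of_lt_of_le Nat.zero_lt_one hT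
  have hne : ∀ a b : E, ‖proj a - proj b‖ ≤ ‖a - b‖ := my_proj_nonexpansive hCco hprojC hproj
  have hfix : ∀ c ∈ C, proj c = c := fun c hc => my_proj_self hproj hc
  have hgradcont : Continuous (gradient Φ) := by
    have hlip : LipschitzWith (Real.toNNReal L) (gradient Φ) :=
      LipschitzWith.of_dist_le_mul fun x y => by
        rw [dist_eq_norm, dist_eq_norm, Real.coe_toNNReal L hL.le]
        exact hLip x y
    exact hlip.continuous
  have hprojcont : Continuous proj := by
    have hlip : LipschitzWith 1 proj := LipschitzWith.of_dist_le_mul fun x y => by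
      rw [dist_eq_norm, dist_eq_norm, NNReal.coe_one, one_mul]
      exact hne x y
    exact hlip.continuous
  set Gf : E → E := fun x => η⁻¹ • (x - proj (x - η • gradient Φ x)) with hGf
  have hGfcont : Continuous Gf := by
    apply Continuous.const_smul
    exact continuous_id.sub (hprojcont.comp (continuous_id.sub (hgradcont.const_smul η)))
  have hGfbound : ∀ x ∈ C, ‖Gf x‖ ≤ ‖gradient Φ x‖ := by
    intro x hx
    have h1 : ‖x - proj (x - η • gradient Φ x)‖ ≤ η * ‖gradient Φ x‖ := by
      calc ‖x - proj (x - η • gradient Φ x)‖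
          = ‖proj x - proj (x - η • gradient Φ x)‖ := by rw [hfix x hx]
        _ ≤ ‖x - (x - η • gradient Φ x)‖ := hne _ _
        _ = η * ‖gradient Φ x‖ := by
            rw [sub_sub_cancel, norm_smul, Real.norm_eq_abs, abs_of_pos hη0]
    calc ‖Gf x‖ = η⁻¹ * ‖x - proj (x - η • gradient Φ x)‖ := by
          rw [hGf]; simp only [norm_smul, Real.norm_eq_abs, abs_of_pos (inv_pos.2 hη0)]
      _ ≤ η⁻¹ * (η * ‖gradient Φ x‖) :=
          mul_le_mul_of_nonneg_left h1 (le_of_lt (inv_pos.2 hη0))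
      _ = ‖gradient Φ x‖ := by field_simp
  have hsm : ∀ t, AEStronglyMeasurable (s t) P :=
    fun t => ((hsmeas t).mono (ℱ.le t)).aestronglyMeasurable
  have hsL2 : ∀ t, 1 ≤ t → t ≤ T + 1 → MemLp (s t) 2 P := by
    intro t ht1
    induction t, ht1 using Nat.le_induction with
    | base =>
      intro _
      have h : s 1 = fun _ => s₁ := funext hs1
      rw [h]; exact memLp_const _
    | succ n hn ih =>
      intro hle
      have hnT : n ∈ Finset.Icc 1 T := Finset.mem_Icc.2 ⟨hn, by omega⟩
      have hsn : MemLp (s n) 2 P := ih (by omega)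
      have hdom : MemLp (fun ω => ‖s n ω - η • g n ω‖ + 2 * ‖c₀‖) 2 P :=
        (hsn.sub ((hgL2 n).const_smul η)).norm.add (memLp_const _)
      refine MemLp.of_le hdom (hsm (n + 1)) (Filter.Eventually.of_forall fun ω => ?_)
      rw [hupdate n hnT ω]
      set z := s n ω - η • g n ω with hz
      have h1 : ‖proj z - c₀‖ ≤ ‖z - c₀‖ := by
        have := hne z c₀; rwa [hfix c₀ hc₀] at this
      have h2 : ‖proj z‖ ≤ ‖proj z - c₀‖ + ‖c₀‖ := by
        have := norm_add_le (proj z - c₀) c₀; rwa [sub_add_cancel] at this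
      have h3 : ‖z - c₀‖ ≤ ‖z‖ + ‖c₀‖ := norm_sub_le _ _
      have h4 : (0 : ℝ) ≤ ‖z‖ + 2 * ‖c₀‖ := by positivity
      rw [Real.norm_of_nonneg h4]
      linarith
  have hdL2 : ∀ t ∈ Finset.Icc 1 T, MemLp (fun ω => gradient Φ (s t ω)) 2 P := by
    intro t ht
    rw [Finset.mem_Icc] at ht
    have hst : MemLp (s t) 2 P := hsL2 t ht.1 (by omega)
    have hdom : MemLp (fun ω => ‖gradient Φ 0‖ + L * ‖s t ω‖) 2 P :=
      by have := (memLp_const (μ := P) (p := 2) ‖gradient Φ 0‖).add (hst.norm.const_mul L); exact this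
    refine MemLp.of_le hdom (hgradcont.comp_aestronglyMeasurable (hsm t))
      (Filter.Eventually.of_forall fun ω => ?_)
    have h1 : ‖gradient Φ (s t ω) - gradient Φ 0‖ ≤ L * ‖s t ω‖ := by
      simpa using hLip (s t ω) 0
    have h2 : ‖gradient Φ (s t ω)‖ ≤ ‖gradient Φ 0‖ + L * ‖s t ω‖ := by
      have := norm_sub_norm_le (gradient Φ (s t ω)) (gradient Φ 0)
      linarith
    have h4 : (0 : ℝ) ≤ ‖gradient Φ 0‖ + L * ‖s t ω‖ := by positivity
    rw [Real.norm_of_nonneg h4]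
    exact h2
  have hδL2 : ∀ t ∈ Finset.Icc 1 T, MemLp (fun ω => g t ω - gradient Φ (s t ω)) 2 P :=
    fun t ht => (hgL2 t).sub (hdL2 t ht)
  have hGmeasF : ∀ t, StronglyMeasurable[ℱ t] (fun ω => Gf (s t ω)) :=
    fun t => hGfcont.comp_stronglyMeasurable (hsmeas t)
  have hGL2 : ∀ t ∈ Finset.Icc 1 T, MemLp (fun ω => Gf (s t ω)) 2 P := by
    intro t ht
    refine MemLp.of_le (hdL2 t ht) ((hGmeasF t).mono (ℱ.le t)).aestronglyMeasurable
      (Filter.Eventually.of_forall fun ω => ?_)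
    exact hGfbound (s t ω) (hsC t ω)
  have hGhatL2 : ∀ t ∈ Finset.Icc 1 T, MemLp (fun ω => η⁻¹ • (s t ω - s (t + 1) ω)) 2 P := by
    intro t ht
    refine MemLp.of_le (hgL2 t)
      (((hsm t).sub (hsm (t + 1))).const_smul η⁻¹)
      (Filter.Eventually.of_forall fun ω => ?_)
    rw [hupdate t ht ω]
    have h1 : ‖s t ω - proj (s t ω - η • g t ω)‖ ≤ η * ‖g t ω‖ := by
      calc ‖s t ω - proj (s t ω - η • g t ω)‖
          = ‖proj (s t ω) - proj (s t ω - η • g t ω)‖ := by rw [hfix (s t ω) (hsC t ω)]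
        _ ≤ ‖s t ω - (s t ω - η • g t ω)‖ := hne _ _
        _ = η * ‖g t ω‖ := by rw [sub_sub_cancel, norm_smul, Real.norm_eq_abs, abs_of_pos hη0]
    calc ‖η⁻¹ • (s t ω - proj (s t ω - η • g t ω))‖
        = η⁻¹ * ‖s t ω - proj (s t ω - η • g t ω)‖ := by
          rw [norm_smul, Real.norm_eq_abs, abs_of_pos (inv_pos.2 hη0)]
      _ ≤ η⁻¹ * (η * ‖g t ω‖) := mul_le_mul_of_nonneg_left h1 (le_of_lt (inv_pos.2 hη0))
      _ = ‖g t ω‖ := by field_simp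
  have hδcond : ∀ t ∈ Finset.Icc 1 T,
      P[(fun ω => g t ω - gradient Φ (s t ω))|ℱ t] =ᵐ[P] 0 := by
    intro t ht
    have hgint : Integrable (g t) P := (hgL2 t).integrable one_le_two
    have hdint : Integrable (fun ω => gradient Φ (s t ω)) P :=
      (hdL2 t ht).integrable one_le_two
    have heq : (fun ω => g t ω - gradient Φ (s t ω))
        = g t - fun ω => gradient Φ (s t ω) := rfl
    rw [heq]
    have hsub := condExp_sub (μ := P) (m := ℱ t) hgint hdint
    have hdfix : P[(fun ω => gradient Φ (s t ω))|ℱ t] = fun ω => gradient Φ (s t ω) :=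
      condExp_of_stronglyMeasurable (ℱ.le t)
        (hgradcont.comp_stronglyMeasurable (hsmeas t)) hdint
    filter_upwards [hsub, hcond t ht] with ω h1 h2
    rw [h1, Pi.sub_apply, h2, hdfix, Pi.zero_apply, sub_self]
  have hzero : ∀ t ∈ Finset.Icc 1 T,
      ∫ ω, ⟪Gf (s t ω), g t ω - gradient Φ (s t ω)⟫ ∂P = 0 := fun t ht =>
    my_integral_inner_condexp_zero (ℱ.le t) (hGmeasF t) (hGL2 t ht)
      (hδL2 t ht) (hδcond t ht)
  have hdes : ∀ x y : E, Φ y ≤ Φ x + ⟪gradient Φ x, y - x⟫ + L / 2 * ‖y - x‖ ^ 2 :=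
    my_descent hΦ hLip
  -- pointwise key inequality
  have hkey : ∀ t ∈ Finset.Icc 1 T, ∀ ω,
      η * (1 - L * η / 2) * ‖η⁻¹ • (s t ω - s (t + 1) ω)‖ ^ 2
        ≤ Φ (s t ω) - Φ (s (t + 1) ω)
          + η * (⟪Gf (s t ω), g t ω - gradient Φ (s t ω)⟫
              + ‖g t ω - gradient Φ (s t ω)‖ ^ 2) := by
    intro t ht ω
    have hi : ⟪s t ω - η • g t ω - s (t + 1) ω, s t ω - s (t + 1) ω⟫ ≤ 0 := by
      have h := my_proj_inner_le_zero hCco hprojC hproj (s t ω - η • g t ω) (hsC t ω)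
      rwa [← hupdate t ht ω] at h
    have hiii : ‖proj (s t ω - η • gradient Φ (s t ω)) - s (t + 1) ω‖
        ≤ η * ‖g t ω - gradient Φ (s t ω)‖ := by
      rw [hupdate t ht ω]
      have h := hne (s t ω - η • gradient Φ (s t ω)) (s t ω - η • g t ω)
      have he : s t ω - η • gradient Φ (s t ω) - (s t ω - η • g t ω)
          = η • (g t ω - gradient Φ (s t ω)) := by rw [smul_sub]; abel
      rw [he, norm_smul, Real.norm_eq_abs, abs_of_pos hη0] at h
      exact h
    have hstep := my_step hη0 hdes (s t ω) (g t ω) (s (t + 1) ω)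
      (proj (s t ω - η • gradient Φ (s t ω))) hi hiii
    simp only [hGf]
    exact hstep
  -- summed pointwise inequality
  have hsumpt : ∀ ω,
      η * (1 - L * η / 2) * ∑ t ∈ Finset.Icc 1 T, ‖η⁻¹ • (s t ω - s (t + 1) ω)‖ ^ 2
        ≤ (Φ s₁ - Φstar)
          + η * ∑ t ∈ Finset.Icc 1 T, (⟪Gf (s t ω), g t ω - gradient Φ (s t ω)⟫
              + ‖g t ω - gradient Φ (s t ω)‖ ^ 2) := by
    intro ω
    have e : Φ (s 1 ω) = Φ s₁ := congrArg Φ (hs1 ω)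
    calc η * (1 - L * η / 2) * ∑ t ∈ Finset.Icc 1 T, ‖η⁻¹ • (s t ω - s (t + 1) ω)‖ ^ 2
        = ∑ t ∈ Finset.Icc 1 T,
            η * (1 - L * η / 2) * ‖η⁻¹ • (s t ω - s (t + 1) ω)‖ ^ 2 :=
          Finset.mul_sum _ _ _
      _ ≤ ∑ t ∈ Finset.Icc 1 T, (Φ (s t ω) - Φ (s (t + 1) ω)
            + η * (⟪Gf (s t ω), g t ω - gradient Φ (s t ω)⟫
                + ‖g t ω - gradient Φ (s t ω)‖ ^ 2)) :=
          Finset.sum_le_sum (fun t ht => hkey t ht ω)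
      _ = (Φ (s 1 ω) - Φ (s (T + 1) ω))
            + η * ∑ t ∈ Finset.Icc 1 T, (⟪Gf (s t ω), g t ω - gradient Φ (s t ω)⟫
                + ‖g t ω - gradient Φ (s t ω)‖ ^ 2) := by
          rw [Finset.sum_add_distrib, my_telescope T (fun t => Φ (s t ω)), ← Finset.mul_sum]
      _ ≤ (Φ s₁ - Φstar)
            + η * ∑ t ∈ Finset.Icc 1 T, (⟪Gf (s t ω), g t ω - gradient Φ (s t ω)⟫
                + ‖g t ω - gradient Φ (s t ω)‖ ^ 2) := by
          linarith [hbdd (s (T + 1) ω)]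
  -- integrability of the summands
  have hintL : ∀ t ∈ Finset.Icc 1 T,
      Integrable (fun ω => ‖η⁻¹ • (s t ω - s (t + 1) ω)‖ ^ 2) P :=
    fun t ht => (hGhatL2 t ht).norm.integrable_sq
  have hintIn : ∀ t ∈ Finset.Icc 1 T,
      Integrable (fun ω => ⟪Gf (s t ω), g t ω - gradient Φ (s t ω)⟫) P :=
    fun t ht => my_integrable_inner (hGL2 t ht) (hδL2 t ht)
  have hintδ2 : ∀ t ∈ Finset.Icc 1 T,
      Integrable (fun ω => ‖g t ω - gradient Φ (s t ω)‖ ^ 2) P :=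
    fun t ht => (hδL2 t ht).norm.integrable_sq
  have hintR : ∀ t ∈ Finset.Icc 1 T,
      Integrable (fun ω => ⟪Gf (s t ω), g t ω - gradient Φ (s t ω)⟫
        + ‖g t ω - gradient Φ (s t ω)‖ ^ 2) P :=
    fun t ht => (hintIn t ht).add (hintδ2 t ht)
  -- expected bound
  have hmain : η * (1 - L * η / 2)
        * ∑ t ∈ Finset.Icc 1 T, ∫ ω, ‖η⁻¹ • (s t ω - s (t + 1) ω)‖ ^ 2 ∂P
      ≤ (Φ s₁ - Φstar) + η * (T * σ ^ 2) := by
    have hIL : Integrable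
        (fun ω => ∑ t ∈ Finset.Icc 1 T, ‖η⁻¹ • (s t ω - s (t + 1) ω)‖ ^ 2) P :=
      integrable_finset_sum _ hintL
    have hIR : Integrable (fun ω => (Φ s₁ - Φstar)
        + η * ∑ t ∈ Finset.Icc 1 T, (⟪Gf (s t ω), g t ω - gradient Φ (s t ω)⟫
            + ‖g t ω - gradient Φ (s t ω)‖ ^ 2)) P :=
      (integrable_const _).add ((integrable_finset_sum _ hintR).const_mul η)
    have hmono := integral_mono (hIL.const_mul (η * (1 - L * η / 2))) hIR hsumpt
    have hLeq : ∫ ω, (η * (1 - L * η / 2))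
          * (∑ t ∈ Finset.Icc 1 T, ‖η⁻¹ • (s t ω - s (t + 1) ω)‖ ^ 2) ∂P
        = η * (1 - L * η / 2)
          * ∑ t ∈ Finset.Icc 1 T, ∫ ω, ‖η⁻¹ • (s t ω - s (t + 1) ω)‖ ^ 2 ∂P := by
      rw [integral_const_mul, integral_finset_sum _ hintL]
    have hReq : ∫ ω, ((Φ s₁ - Φstar)
          + η * ∑ t ∈ Finset.Icc 1 T, (⟪Gf (s t ω), g t ω - gradient Φ (s t ω)⟫
              + ‖g t ω - gradient Φ (s t ω)‖ ^ 2)) ∂P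
        = (Φ s₁ - Φstar)
          + η * ∑ t ∈ Finset.Icc 1 T, ∫ ω, (⟪Gf (s t ω), g t ω - gradient Φ (s t ω)⟫
              + ‖g t ω - gradient Φ (s t ω)‖ ^ 2) ∂P := by
      rw [integral_add (integrable_const _) ((integrable_finset_sum _ hintR).const_mul η),
        integral_const, integral_const_mul, integral_finset_sum _ hintR]
      simp
    have hsb : ∑ t ∈ Finset.Icc 1 T, ∫ ω, (⟪Gf (s t ω), g t ω - gradient Φ (s t ω)⟫
          + ‖g t ω - gradient Φ (s t ω)‖ ^ 2) ∂P ≤ T * σ ^ 2 := by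
      have h1 : ∀ t ∈ Finset.Icc 1 T, ∫ ω, (⟪Gf (s t ω), g t ω - gradient Φ (s t ω)⟫
            + ‖g t ω - gradient Φ (s t ω)‖ ^ 2) ∂P ≤ σ ^ 2 := by
        intro t ht
        rw [integral_add (hintIn t ht) (hintδ2 t ht), hzero t ht, zero_add]
        exact hvar t ht
      calc ∑ t ∈ Finset.Icc 1 T, ∫ ω, (⟪Gf (s t ω), g t ω - gradient Φ (s t ω)⟫
            + ‖g t ω - gradient Φ (s t ω)‖ ^ 2) ∂P
          ≤ ∑ _t ∈ Finset.Icc 1 T, σ ^ 2 := Finset.sum_le_sum h1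
        _ = T * σ ^ 2 := by
            rw [Finset.sum_const, Nat.card_Icc, nsmul_eq_mul]
            norm_num
    rw [hLeq, hReq] at hmono
    have h2 : η * (∑ t ∈ Finset.Icc 1 T, ∫ ω, (⟪Gf (s t ω), g t ω - gradient Φ (s t ω)⟫
          + ‖g t ω - gradient Φ (s t ω)‖ ^ 2) ∂P) ≤ η * (T * σ ^ 2) :=
      mul_le_mul_of_nonneg_left hsb hη0.le
    linarith
  -- final algebra
  have hc : 0 < η * (1 - L * η / 2) * T := by positivity
  have hstep2 : (1 / (T : ℝ))
        * ∑ t ∈ Finset.Icc 1 T, ∫ ω, ‖η⁻¹ • (s t ω - s (t + 1) ω)‖ ^ 2 ∂P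
      ≤ ((Φ s₁ - Φstar) + η * (T * σ ^ 2)) / (η * (1 - L * η / 2) * T) := by
    rw [one_div, inv_mul_eq_div, div_le_div_iff₀ hTpos hc]
    nlinarith [mul_le_mul_of_nonneg_right hmain hTpos.le]
  have heq : ((Φ s₁ - Φstar) + η * (T * σ ^ 2)) / (η * (1 - L * η / 2) * T)
      = (Φ s₁ - Φstar) / (η * (1 - L * η / 2) * T) + σ ^ 2 / (1 - L * η / 2) := by
    rw [add_div]
    congr 1
    rw [div_eq_div_iff (ne_of_gt hc) (ne_of_gt hB)]
    ring
  rw [← heq]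
  exact hstep2
end

section
/- Let (Ω, ℱ, P) be a probability space with filtration (ℱ_t), let C be a nonempty closed convex subset of a finite-dimensional real inner product space E, and let Φ : E → ℝ be differentiable with L-Lipschitz gradient and bounded below by Φ*. Let 0 < η < 1/L, and let random iterates s^t (ℱ_t-measurable, valued in C) and stochastic gradients g^t (ℱ_{t+1}-measurable, square-integrable) satisfy for every t ≥ 1: s^{t+1} = P_C(s^t − η·g^t), E[g^t | ℱ_t] = ∇Φ(s^t) almost surely, and E‖g^t − ∇Φ(s^t)‖² ≤ σ², with s¹ deterministic. Define G^t = (s^t − P_C(s^t − η·∇Φ(s^t)))/η. Then limsup_{T→∞} (1/T)·Σ_{t=1}^{T} E‖G^t‖² ≤ ((8 − 2Lη)/(2 − Lη))·σ². -/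
open MeasureTheory RealInnerProductSpace
set_option linter.unusedSectionVars false
set_option maxHeartbeats 1000000


section Proj
variable {E : Type*} [NormedAddCommGroup E] [InnerProductSpace ℝ E] [FiniteDimensional ℝ E]
variable {C : Set E} {proj : E → E}

lemma proj_inner_le (hCne : C.Nonempty) (hCco : Convex ℝ C)
    (hprojC : ∀ x, proj x ∈ C) (hproj : ∀ x, ∀ c ∈ C, ‖x - proj x‖ ≤ ‖x - c‖)
    (x : E) : ∀ c ∈ C, ⟪x - proj x, c - proj x⟫ ≤ 0 := by
  haveI : Nonempty ↑C := hCne.to_subtype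
  refine (norm_eq_iInf_iff_real_inner_le_zero hCco (hprojC x)).1 ?_
  refine le_antisymm (le_ciInf fun w => hproj x w w.2) ?_
  have bdd : BddBelow (Set.range fun w : C => ‖x - (w : E)‖) :=
    ⟨0, by rintro r ⟨w, rfl⟩; positivity⟩
  exact ciInf_le bdd ⟨proj x, hprojC x⟩

omit [InnerProductSpace ℝ E] [FiniteDimensional ℝ E] in
lemma proj_mem_fix (hproj : ∀ x, ∀ c ∈ C, ‖x - proj x‖ ≤ ‖x - c‖)
    {x : E} (hx : x ∈ C) : proj x = x := by
  have := hproj x x hx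
  simp only [sub_self, norm_zero, norm_le_zero_iff, sub_eq_zero] at this
  exact this.symm

lemma proj_nonexpansive (hCne : C.Nonempty) (hCco : Convex ℝ C)
    (hprojC : ∀ x, proj x ∈ C) (hproj : ∀ x, ∀ c ∈ C, ‖x - proj x‖ ≤ ‖x - c‖)
    (x y : E) : ‖proj x - proj y‖ ≤ ‖x - y‖ := by
  have h1 := proj_inner_le hCne hCco hprojC hproj x (proj y) (hprojC y)
  have h2 := proj_inner_le hCne hCco hprojC hproj y (proj x) (hprojC x)
  set u := proj x - proj y with hu
  have e1 : proj y - proj x = -u := by rw [hu]; abel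
  rw [e1, inner_neg_right] at h1
  have h1' : (0:ℝ) ≤ ⟪x - proj x, u⟫ := by linarith
  have key : ‖u‖ ^ 2 ≤ ⟪x - y, u⟫ := by
    have e2 : x - y = (x - proj x) + u + (proj y - y) := by rw [hu]; abel
    rw [e2, inner_add_left, inner_add_left, real_inner_self_eq_norm_sq]
    have e3 : ⟪proj y - y, u⟫ = -⟪y - proj y, u⟫ := by
      rw [← inner_neg_left]; congr 1; abel
    rw [e3]
    linarith
  have hcs := real_inner_le_norm (x - y) u
  nlinarith [norm_nonneg u, norm_nonneg (x - y)]
end Proj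

section Descent
variable {E : Type*} [NormedAddCommGroup E] [InnerProductSpace ℝ E] [CompleteSpace E]

lemma gradient_lipschitz_continuous {Φ : E → ℝ} {L : ℝ} (hL : 0 < L)
    (hLip : ∀ x y, ‖gradient Φ x - gradient Φ y‖ ≤ L * ‖x - y‖) :
    Continuous (gradient Φ) := by
  have : LipschitzWith ⟨L, hL.le⟩ (gradient Φ) := by
    apply LipschitzWith.of_dist_le_mul
    intro x y
    rw [dist_eq_norm, dist_eq_norm]; exact hLip x y
  exact this.continuous

lemma descent_lemma {Φ : E → ℝ} {L : ℝ} (hΦ : Differentiable ℝ Φ) (hL : 0 < L)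
    (hLip : ∀ x y, ‖gradient Φ x - gradient Φ y‖ ≤ L * ‖x - y‖)
    (x y : E) : Φ y ≤ Φ x + ⟪gradient Φ x, y - x⟫ + L / 2 * ‖y - x‖ ^ 2 := by
  set d := y - x with hd
  have hgcont : Continuous (gradient Φ) := gradient_lipschitz_continuous hL hLip
  have hline : ∀ t : ℝ, HasDerivAt (fun t : ℝ => x + t • d) d t := by
    intro t
    simpa using ((hasDerivAt_id t).smul_const d).const_add x
  have hderiv : ∀ t : ℝ, HasDerivAt (fun t : ℝ => Φ (x + t • d))
      ⟪gradient Φ (x + t • d), d⟫ t := by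
    intro t
    have h1 := (hΦ (x + t • d)).hasGradientAt.hasFDerivAt
    have := h1.comp_hasDerivAt t (hline t)
    simpa [InnerProductSpace.toDual_apply_apply, Function.comp_def] using this
  have hcont : Continuous fun t : ℝ => ⟪gradient Φ (x + t • d), d⟫ := by
    apply Continuous.inner (by fun_prop) continuous_const
  have hFTC : Φ (x + (1:ℝ) • d) - Φ (x + (0:ℝ) • d)
      = ∫ t in (0:ℝ)..1, ⟪gradient Φ (x + t • d), d⟫ := by
    rw [intervalIntegral.integral_eq_sub_of_hasDerivAt (fun t _ => hderiv t)
      (hcont.intervalIntegrable 0 1)]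
  simp only [one_smul, zero_smul, add_zero] at hFTC
  have hmono : ∫ t in (0:ℝ)..1, ⟪gradient Φ (x + t • d), d⟫
      ≤ ∫ t in (0:ℝ)..1, (⟪gradient Φ x, d⟫ + L * t * ‖d‖ ^ 2) := by
    apply intervalIntegral.integral_mono_on zero_le_one (hcont.intervalIntegrable 0 1)
    · apply IntervalIntegrable.add (intervalIntegrable_const)
      apply Continuous.intervalIntegrable; fun_prop
    · intro t ht
      have h1 : ⟪gradient Φ (x + t • d), d⟫ - ⟪gradient Φ x, d⟫
          = ⟪gradient Φ (x + t • d) - gradient Φ x, d⟫ := (inner_sub_left _ _ _).symm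
      have h2 : ⟪gradient Φ (x + t • d) - gradient Φ x, d⟫ ≤ L * t * ‖d‖ ^ 2 := by
        calc ⟪gradient Φ (x + t • d) - gradient Φ x, d⟫
            ≤ ‖gradient Φ (x + t • d) - gradient Φ x‖ * ‖d‖ := real_inner_le_norm _ _
          _ ≤ (L * ‖x + t • d - x‖) * ‖d‖ := by
              have := hLip (x + t • d) x
              have hn : (0:ℝ) ≤ ‖d‖ := norm_nonneg _
              nlinarith [this]
          _ = L * t * ‖d‖ ^ 2 := by
              rw [add_sub_cancel_left, norm_smul, Real.norm_eq_abs, abs_of_nonneg ht.1]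
              ring
      linarith
  have hval : ∫ t in (0:ℝ)..1, (⟪gradient Φ x, d⟫ + L * t * ‖d‖ ^ 2)
      = ⟪gradient Φ x, d⟫ + L / 2 * ‖d‖ ^ 2 := by
    rw [intervalIntegral.integral_add intervalIntegrable_const
      (by apply Continuous.intervalIntegrable; fun_prop)]
    simp only [intervalIntegral.integral_const, smul_eq_mul, sub_zero, one_mul]
    have : ∫ t in (0:ℝ)..1, L * t * ‖d‖ ^ 2 = (L * ‖d‖^2) * ∫ t in (0:ℝ)..1, t := by
      rw [← intervalIntegral.integral_const_mul]
      congr 1; ext t; ring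
    rw [this, integral_id]
    ring
  rw [hval] at hmono
  have hxy : x + d = y := by rw [hd]; abel
  rw [hxy] at hFTC
  linarith [hFTC ▸ hmono]
end Descent

section Cond
variable {E : Type*} [NormedAddCommGroup E] [InnerProductSpace ℝ E] [FiniteDimensional ℝ E]
variable {Ω : Type*} {m mΩ : MeasurableSpace Ω} {μ : Measure Ω}

lemma integrable_inner_of_memL2 {u v : Ω → E} (hu : MemLp u 2 μ) (hv : MemLp v 2 μ) :
    Integrable (fun ω => ⟪u ω, v ω⟫) μ := by
  have h := L2.integrable_inner (𝕜 := ℝ) (hu.toLp u) (hv.toLp v)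
  refine h.congr ?_
  filter_upwards [hu.coeFn_toLp, hv.coeFn_toLp] with ω h1 h2
  rw [h1, h2]

lemma integrable_mul_of_memL2 {f g : Ω → ℝ} (hf : MemLp f 2 μ) (hg : MemLp g 2 μ) :
    Integrable (fun ω => f ω * g ω) μ := by
  have := integrable_inner_of_memL2 (E := ℝ) hf hg
  simpa [RCLike.inner_apply, starRingEnd_apply, star_trivial, mul_comm] using this

lemma condexp_const_inner (hm : m ≤ mΩ) [IsProbabilityMeasure μ]
    {f : Ω → E} (hf : Integrable f μ) (c : E) :
    μ[fun ω => ⟪c, f ω⟫|m] =ᵐ[μ] fun ω => ⟪c, (μ[f|m]) ω⟫ := by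
  refine (ae_eq_condExp_of_forall_setIntegral_eq hm (hf.const_inner c) ?_ ?_ ?_).symm
  · exact fun s _ _ => (integrable_condExp.const_inner c).integrableOn
  · intro s hs _
    rw [integral_inner integrable_condExp.integrableOn c,
      setIntegral_condExp hm hf hs, ← integral_inner hf.integrableOn c]
  · exact ⟨fun ω => ⟪c, (μ[f|m]) ω⟫,
      (stronglyMeasurable_const.inner stronglyMeasurable_condExp),
      Filter.EventuallyEq.rfl⟩

lemma integral_inner_condexp (hm : m ≤ mΩ) [IsProbabilityMeasure μ]
    {u v : Ω → E} (hum : StronglyMeasurable[m] u) (hu : MemLp u 2 μ)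
    (hv : MemLp v 2 μ) (hcv : MemLp (μ[v|m]) 2 μ) :
    ∫ ω, ⟪u ω, v ω⟫ ∂μ = ∫ ω, ⟪u ω, (μ[v|m]) ω⟫ ∂μ := by
  set b := stdOrthonormalBasis ℝ E with hb
  have expand : ∀ (w : Ω → E) (ω : Ω), ⟪u ω, w ω⟫ = ∑ i, ⟪u ω, b i⟫ * ⟪b i, w ω⟫ :=
    fun w ω => (b.sum_inner_mul_inner _ _).symm
  have hui : ∀ i, MemLp (fun ω => ⟪u ω, b i⟫) 2 μ := fun i => hu.inner_const (b i)
  have humi : ∀ i, StronglyMeasurable[m] (fun ω => ⟪u ω, b i⟫) :=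
    fun i => hum.inner stronglyMeasurable_const
  have hvi : ∀ i, MemLp (fun ω => ⟪b i, v ω⟫) 2 μ := fun i => hv.const_inner (b i)
  have hIuv : ∀ i, Integrable (fun ω => ⟪u ω, b i⟫ * ⟪b i, v ω⟫) μ :=
    fun i => integrable_mul_of_memL2 (hui i) (hvi i)
  have hIucv : ∀ i, Integrable (fun ω => ⟪u ω, b i⟫ * ⟪b i, (μ[v|m]) ω⟫) μ :=
    fun i => integrable_mul_of_memL2 (hui i) (hcv.const_inner (b i))
  calc ∫ ω, ⟪u ω, v ω⟫ ∂μ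
      = ∫ ω, ∑ i, ⟪u ω, b i⟫ * ⟪b i, v ω⟫ ∂μ := by
        exact integral_congr_ae (Filter.Eventually.of_forall fun ω => expand v ω)
    _ = ∑ i, ∫ ω, ⟪u ω, b i⟫ * ⟪b i, v ω⟫ ∂μ := integral_finset_sum _ fun i _ => hIuv i
    _ = ∑ i, ∫ ω, ⟪u ω, b i⟫ * ⟪b i, (μ[v|m]) ω⟫ ∂μ := by
        refine Finset.sum_congr rfl fun i _ => ?_
        have hpull := condExp_mul_of_stronglyMeasurable_left (μ := μ) (m := m) (humi i)
          (by simpa [Pi.mul_def] using hIuv i) ((hvi i).integrable one_le_two)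
        have hcci := condexp_const_inner hm (hv.integrable one_le_two) (b i)
        calc ∫ ω, ⟪u ω, b i⟫ * ⟪b i, v ω⟫ ∂μ
            = ∫ ω, (μ[(fun ω => ⟪u ω, b i⟫) * (fun ω => ⟪b i, v ω⟫)|m]) ω ∂μ := by
              rw [integral_condExp hm]; simp [Pi.mul_def]
          _ = ∫ ω, ⟪u ω, b i⟫ * (μ[fun ω => ⟪b i, v ω⟫|m]) ω ∂μ := by
              refine integral_congr_ae (hpull.mono fun ω hω => ?_)
              simpa [Pi.mul_apply] using hω
          _ = ∫ ω, ⟪u ω, b i⟫ * ⟪b i, (μ[v|m]) ω⟫ ∂μ := by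
              refine integral_congr_ae (hcci.mono fun ω hω => ?_)
              simp only [hω]
    _ = ∫ ω, ∑ i, ⟪u ω, b i⟫ * ⟪b i, (μ[v|m]) ω⟫ ∂μ :=
        (integral_finset_sum _ fun i _ => hIucv i).symm
    _ = ∫ ω, ⟪u ω, (μ[v|m]) ω⟫ ∂μ :=
        integral_congr_ae (Filter.Eventually.of_forall fun ω => (expand _ ω).symm)

lemma integral_inner_sub_eq_zero (hm : m ≤ mΩ) [IsProbabilityMeasure μ]
    {u v h : Ω → E} (hum : StronglyMeasurable[m] u) (hu : MemLp u 2 μ)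
    (hv : MemLp v 2 μ) (hh : MemLp h 2 μ) (hch : μ[v|m] =ᵐ[μ] h) :
    ∫ ω, ⟪u ω, v ω - h ω⟫ ∂μ = 0 := by
  have hcv : MemLp (μ[v|m]) 2 μ := hh.ae_eq hch.symm
  have h1 : ∫ ω, ⟪u ω, v ω - h ω⟫ ∂μ
      = ∫ ω, ⟪u ω, v ω⟫ ∂μ - ∫ ω, ⟪u ω, h ω⟫ ∂μ := by
    rw [← integral_sub (integrable_inner_of_memL2 hu hv) (integrable_inner_of_memL2 hu hh)]
    exact integral_congr_ae (Filter.Eventually.of_forall fun ω => by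
      simp only [inner_sub_right])
  rw [h1, integral_inner_condexp hm hum hu hv hcv]
  have : ∫ ω, ⟪u ω, (μ[v|m]) ω⟫ ∂μ = ∫ ω, ⟪u ω, h ω⟫ ∂μ :=
    integral_congr_ae (hch.mono fun ω hω => by simp only [hω])
  rw [this, sub_self]
end Cond


section Main
variable {E : Type*} [NormedAddCommGroup E] [InnerProductSpace ℝ E] [FiniteDimensional ℝ E]
variable {Ω : Type*} {mΩ : MeasurableSpace Ω}

theorem psgd_limsup_aux
    (P : Measure Ω) [IsProbabilityMeasure P]
    (ℱ : Filtration ℕ mΩ)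
    (C : Set E) (hCne : C.Nonempty) (hCcl : IsClosed C) (hCco : Convex ℝ C)
    (proj : E → E)
    (hprojC : ∀ x, proj x ∈ C) (hproj : ∀ x, ∀ c ∈ C, ‖x - proj x‖ ≤ ‖x - c‖)
    (Φ : E → ℝ) (L Φstar : ℝ) (hΦ : Differentiable ℝ Φ)
    (hLip : ∀ x y, ‖gradient Φ x - gradient Φ y‖ ≤ L * ‖x - y‖)
    (hbdd : ∀ x, Φstar ≤ Φ x)
    (η : ℝ) (hL : 0 < L) (hη0 : 0 < η) (hηL : η < 1 / L)
    (σ : ℝ)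
    (s g : ℕ → Ω → E)
    (hsmeas : ∀ t, StronglyMeasurable[ℱ t] (s t))
    (hsC : ∀ t ω, s t ω ∈ C)
    (hgmeas : ∀ t, StronglyMeasurable[ℱ (t + 1)] (g t))
    (hgL2 : ∀ t, MemLp (g t) 2 P)
    (hupdate : ∀ t, 1 ≤ t → ∀ ω, s (t + 1) ω = proj (s t ω - η • g t ω))
    (hcond : ∀ t, 1 ≤ t → P[g t|ℱ t] =ᵐ[P] fun ω => gradient Φ (s t ω))
    (hvar : ∀ t, 1 ≤ t → ∫ ω, ‖g t ω - gradient Φ (s t ω)‖ ^ 2 ∂P ≤ σ ^ 2)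
    (s₁ : E) (hs1 : ∀ ω, s 1 ω = s₁) :
    Filter.limsup
        (fun T : ℕ =>
          (1 / (T : ℝ)) *
            ∑ t ∈ Finset.Icc 1 T,
              ∫ ω, ‖η⁻¹ • (s t ω - proj (s t ω - η • gradient Φ (s t ω)))‖ ^ 2 ∂P)
        Filter.atTop
      ≤ ((8 - 2 * L * η) / (2 - L * η)) * σ ^ 2 := by
  classical
  have hηL' : L * η < 1 := by
    rw [lt_div_iff₀ hL] at hηL; linarith
  have hη0' : η ≠ 0 := ne_of_gt hη0
  set A : ℝ := 1 / η - L / 2 with hA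
  have hApos : 0 < A := by
    rw [hA]
    have h1 : L < 1 / η := by
      rw [lt_div_iff₀ hη0]; linarith [mul_comm L η]
    linarith
  have hσ2 : (0:ℝ) ≤ σ ^ 2 := sq_nonneg σ
  have hgradcont : Continuous (gradient Φ) := gradient_lipschitz_continuous hL hLip
  have hprojcont : Continuous proj := by
    have : LipschitzWith 1 proj := by
      apply LipschitzWith.of_dist_le_mul
      intro x y
      simpa [dist_eq_norm] using proj_nonexpansive hCne hCco hprojC hproj x y
    exact this.continuous
  -- abbreviations
  set h : ℕ → Ω → E := fun t ω => gradient Φ (s t ω) with hh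
  set δ : ℕ → Ω → E := fun t ω => g t ω - h t ω with hδ
  set G : ℕ → Ω → E := fun t ω => s t ω - proj (s t ω - η • h t ω) with hG
  set d : ℕ → Ω → E := fun t ω => s t ω - s (t+1) ω with hd
  -- measurability
  have hsSM : ∀ t, StronglyMeasurable (s t) := fun t => (hsmeas t).mono (ℱ.le t)
  have hgSM : ∀ t, StronglyMeasurable (g t) := fun t => (hgmeas t).mono (ℱ.le _)
  have hhSMf : ∀ t, StronglyMeasurable[ℱ t] (h t) := fun t =>
    hgradcont.comp_stronglyMeasurable (hsmeas t)
  have hGSMf : ∀ t, StronglyMeasurable[ℱ t] (G t) := by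
    intro t
    have hcont : Continuous (fun x : E => x - proj (x - η • gradient Φ x)) := by fun_prop
    exact hcont.comp_stronglyMeasurable (hsmeas t)
  have hdSM : ∀ t, StronglyMeasurable (d t) := fun t => (hsSM t).sub (hsSM (t+1))
  -- L2 membership
  have hsL2' : ∀ n : ℕ, MemLp (s (n+1)) 2 P := by
    intro n
    induction n with
    | zero =>
      have hs1' : s 1 = fun _ => s₁ := funext hs1
      rw [hs1']; exact memLp_const s₁
    | succ k ihk =>
      have hupd := hupdate (k+1) (Nat.le_add_left 1 k)
      set F : Ω → ℝ := fun ω => ‖s (k+1) ω‖ + η * ‖g (k+1) ω‖ + ‖proj 0‖ with hF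
      have hFL2 : MemLp F 2 P :=
        (ihk.norm.add ((hgL2 (k+1)).norm.const_mul η)).add (memLp_const _)
      refine MemLp.of_le hFL2 ((hsSM (k+2)).aestronglyMeasurable) ?_
      refine Filter.Eventually.of_forall fun ω => ?_
      have hupdω := hupd ω
      have hz : ‖proj (s (k+1) ω - η • g (k+1) ω)‖
          ≤ ‖s (k+1) ω - η • g (k+1) ω - 0‖ + ‖proj 0‖ := by
        have h1 := proj_nonexpansive hCne hCco hprojC hproj (s (k+1) ω - η • g (k+1) ω) 0
        have h2 := norm_add_le (proj (s (k+1) ω - η • g (k+1) ω) - proj 0) (proj 0)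
        simp only [sub_add_cancel] at h2
        linarith
      have hz2 : ‖s (k+1) ω - η • g (k+1) ω - 0‖ ≤ ‖s (k+1) ω‖ + η * ‖g (k+1) ω‖ := by
        rw [sub_zero]
        calc ‖s (k+1) ω - η • g (k+1) ω‖ ≤ ‖s (k+1) ω‖ + ‖η • g (k+1) ω‖ := norm_sub_le _ _
          _ = ‖s (k+1) ω‖ + η * ‖g (k+1) ω‖ := by
              rw [norm_smul, Real.norm_eq_abs, abs_of_pos hη0]
      have hFnn : (0:ℝ) ≤ F ω := by
        simp only [hF]; positivity
      rw [show (k+1+1) = k+2 from rfl] at hupdω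
      rw [hupdω, Real.norm_eq_abs, abs_of_nonneg hFnn]
      simp only [hF]
      linarith
  have hsL2 : ∀ t, 1 ≤ t → MemLp (s t) 2 P := by
    intro t ht
    obtain ⟨n, rfl⟩ := Nat.exists_eq_add_of_le ht
    simpa [add_comm] using hsL2' n
  have hhL2 : ∀ t, 1 ≤ t → MemLp (h t) 2 P := by
    intro t ht
    set F : Ω → ℝ := fun ω => ‖gradient Φ 0‖ + L * ‖s t ω‖ with hF
    have hFL2 : MemLp F 2 P := (memLp_const (‖gradient Φ 0‖)).add ((hsL2 t ht).norm.const_mul L)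
    refine MemLp.of_le hFL2 ((hhSMf t).mono (ℱ.le t)).aestronglyMeasurable ?_
    refine Filter.Eventually.of_forall fun ω => ?_
    have h1 : ‖gradient Φ (s t ω) - gradient Φ 0‖ ≤ L * ‖s t ω - 0‖ := hLip _ _
    have h2 := norm_add_le (gradient Φ (s t ω) - gradient Φ 0) (gradient Φ 0)
    simp only [sub_add_cancel, sub_zero] at h1 h2
    have hFnn : (0:ℝ) ≤ F ω := by simp only [hF]; positivity
    rw [Real.norm_eq_abs, abs_of_nonneg hFnn]
    simp only [hh, hF]
    linarith
  have hδL2 : ∀ t, 1 ≤ t → MemLp (δ t) 2 P := fun t ht => (hgL2 t).sub (hhL2 t ht)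
  have hGL2 : ∀ t, 1 ≤ t → MemLp (G t) 2 P := by
    intro t ht
    refine MemLp.of_le (((hhL2 t ht).const_smul η).norm) ((hGSMf t).mono (ℱ.le t)).aestronglyMeasurable ?_
    refine Filter.Eventually.of_forall fun ω => ?_
    have hfix : proj (s t ω) = s t ω := proj_mem_fix hproj (hsC t ω)
    have h1 : ‖G t ω‖ = ‖proj (s t ω) - proj (s t ω - η • h t ω)‖ := by
      simp only [hG, hfix]
    have h2 := proj_nonexpansive hCne hCco hprojC hproj (s t ω) (s t ω - η • h t ω)
    have h3 : s t ω - (s t ω - η • h t ω) = η • h t ω := by abel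
    rw [h3] at h2
    rw [h1]
    calc ‖proj (s t ω) - proj (s t ω - η • h t ω)‖ ≤ ‖η • h t ω‖ := h2
      _ ≤ ‖‖η • h t ω‖‖ := le_abs_self _
  have hdL2 : ∀ t, 1 ≤ t → MemLp (d t) 2 P := by
    intro t ht
    refine MemLp.of_le (((hgL2 t).const_smul η).norm) (hdSM t).aestronglyMeasurable ?_
    refine Filter.Eventually.of_forall fun ω => ?_
    have hfix : proj (s t ω) = s t ω := proj_mem_fix hproj (hsC t ω)
    have h1 : d t ω = proj (s t ω) - proj (s t ω - η • g t ω) := by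
      simp only [hd, hfix, hupdate t ht ω]
    have h2 := proj_nonexpansive hCne hCco hprojC hproj (s t ω) (s t ω - η • g t ω)
    have h3 : s t ω - (s t ω - η • g t ω) = η • g t ω := by abel
    rw [h3] at h2
    rw [h1]
    calc ‖proj (s t ω) - proj (s t ω - η • g t ω)‖ ≤ ‖η • g t ω‖ := h2
      _ ≤ ‖‖η • g t ω‖‖ := le_abs_self _
  -- integrability of squares and inner products
  have hsqint : ∀ (f : Ω → E), MemLp f 2 P → Integrable (fun ω => ‖f ω‖ ^ 2) P := by
    intro f hf
    simpa [pow_two] using integrable_mul_of_memL2 hf.norm hf.norm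
  -- pointwise bounds
  have hdG : ∀ t, 1 ≤ t → ∀ ω, ‖d t ω - G t ω‖ ≤ η * ‖δ t ω‖ := by
    intro t ht ω
    have e : d t ω - G t ω = proj (s t ω - η • h t ω) - proj (s t ω - η • g t ω) := by
      simp only [hd, hG, hupdate t ht ω]; abel
    have h2 := proj_nonexpansive hCne hCco hprojC hproj (s t ω - η • h t ω) (s t ω - η • g t ω)
    have e2 : (s t ω - η • h t ω) - (s t ω - η • g t ω) = η • (g t ω - h t ω) := by
      rw [smul_sub]; abel
    rw [e2] at h2
    rw [e]
    calc ‖proj (s t ω - η • h t ω) - proj (s t ω - η • g t ω)‖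
        ≤ ‖η • (g t ω - h t ω)‖ := h2
      _ = η * ‖δ t ω‖ := by
          rw [norm_smul, Real.norm_eq_abs, abs_of_pos hη0]
  have hprojineq : ∀ t, 1 ≤ t → ∀ ω, ‖d t ω‖ ^ 2 ≤ η * ⟪g t ω, d t ω⟫ := by
    intro t ht ω
    have hpi := proj_inner_le hCne hCco hprojC hproj (s t ω - η • g t ω) (s t ω) (hsC t ω)
    have e1 : s t ω - η • g t ω - proj (s t ω - η • g t ω) = d t ω - η • g t ω := by
      simp only [hd, hupdate t ht ω]; abel
    have e2 : s t ω - proj (s t ω - η • g t ω) = d t ω := by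
      simp only [hd, hupdate t ht ω]
    rw [e1, e2, inner_sub_left, real_inner_smul_left, real_inner_self_eq_norm_sq] at hpi
    have := real_inner_comm (g t ω) (d t ω)
    linarith [hpi]
  have hdescent : ∀ t, 1 ≤ t → ∀ ω,
      Φ (s (t+1) ω) ≤ Φ (s t ω) - A * ‖d t ω‖ ^ 2 + ⟪δ t ω, d t ω⟫ := by
    intro t ht ω
    have hdes := descent_lemma hΦ hL hLip (s t ω) (s (t+1) ω)
    have e1 : s (t+1) ω - s t ω = -(d t ω) := by simp only [hd]; abel
    rw [e1, inner_neg_right, norm_neg] at hdes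
    have e2 : ⟪δ t ω, d t ω⟫ = ⟪g t ω, d t ω⟫ - ⟪h t ω, d t ω⟫ := by
      simp only [hδ, inner_sub_left]
    have e3 : ⟪gradient Φ (s t ω), d t ω⟫ = ⟪h t ω, d t ω⟫ := rfl
    rw [e3] at hdes
    have hpi := hprojineq t ht ω
    have hη' : ‖d t ω‖ ^ 2 / η ≤ ⟪g t ω, d t ω⟫ := by
      rw [div_le_iff₀ hη0] at *
      · linarith [hpi]
    have hA' : A * ‖d t ω‖ ^ 2 = (1/η) * ‖d t ω‖ ^ 2 - L/2 * ‖d t ω‖ ^ 2 := by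
      rw [hA]; ring
    have h4 : ‖d t ω‖ ^ 2 / η = (1/η) * ‖d t ω‖ ^ 2 := by ring
    rw [h4] at hη'
    have key : Φ (s (t+1) ω) ≤ Φ (s t ω)
        - (1/η * ‖d t ω‖ ^ 2 - L/2 * ‖d t ω‖ ^ 2) + ⟪δ t ω, d t ω⟫ := by
      linarith [hdes, e2, hη']
    rw [show A * ‖d t ω‖ ^ 2 = 1/η * ‖d t ω‖ ^ 2 - L/2 * ‖d t ω‖ ^ 2 from hA']
    exact key
  have hGd : ∀ t, 1 ≤ t → ∀ ω,
      ‖G t ω‖ ^ 2 ≤ 2 * ‖d t ω‖ ^ 2 + 2 * η ^ 2 * ‖δ t ω‖ ^ 2 := by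
    intro t ht ω
    have h1 : ‖G t ω‖ ≤ ‖d t ω‖ + ‖d t ω - G t ω‖ := by
      have e := norm_sub_le (d t ω) (d t ω - G t ω)
      simpa [sub_sub_cancel] using e
    have h2 : ‖G t ω‖ ≤ ‖d t ω‖ + η * ‖δ t ω‖ := le_trans h1 (by linarith [hdG t ht ω])
    nlinarith [norm_nonneg (G t ω), norm_nonneg (d t ω), norm_nonneg (δ t ω),
      sq_nonneg (‖d t ω‖ - η * ‖δ t ω‖), hη0.le,
      mul_nonneg (norm_nonneg (d t ω)) (mul_nonneg hη0.le (norm_nonneg (δ t ω)))]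
  -- variance bound in δ form
  have hvarδ : ∀ t, 1 ≤ t → ∫ ω, ‖δ t ω‖ ^ 2 ∂P ≤ σ ^ 2 := by
    intro t ht
    have hv := hvar t ht
    have : (fun ω => ‖δ t ω‖ ^ 2) = fun ω => ‖g t ω - gradient Φ (s t ω)‖ ^ 2 := by
      funext ω; simp only [hδ, hh]
    rw [this]
    exact hv
  have hIδd : ∀ t, 1 ≤ t → Integrable (fun ω => ⟪δ t ω, d t ω⟫) P :=
    fun t ht => integrable_inner_of_memL2 (hδL2 t ht) (hdL2 t ht)
  have hI_dsq : ∀ t, 1 ≤ t → Integrable (fun ω => ‖d t ω‖ ^ 2) P :=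
    fun t ht => hsqint _ (hdL2 t ht)
  -- E⟪δ,d⟫ ≤ η σ²
  have hEδd : ∀ t, 1 ≤ t → ∫ ω, ⟪δ t ω, d t ω⟫ ∂P ≤ η * σ ^ 2 := by
    intro t ht
    have hzero : ∫ ω, ⟪G t ω, δ t ω⟫ ∂P = 0 := by
      have hz := integral_inner_sub_eq_zero (ℱ.le t) (hGSMf t) (hGL2 t ht) (hgL2 t)
        (hhL2 t ht) (hcond t ht)
      simpa only [hδ] using hz
    have hsplit : ∫ ω, ⟪δ t ω, d t ω⟫ ∂P
        = (∫ ω, ⟪δ t ω, d t ω - G t ω⟫ ∂P) + ∫ ω, ⟪δ t ω, G t ω⟫ ∂P := by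
      have e1 : ∫ ω, ⟪δ t ω, d t ω⟫ ∂P
          = ∫ ω, (⟪δ t ω, d t ω - G t ω⟫ + ⟪δ t ω, G t ω⟫) ∂P := by
        refine integral_congr_ae (Filter.Eventually.of_forall fun ω => ?_)
        simp only [← inner_add_right, sub_add_cancel]
      have e2 : ∫ ω, (⟪δ t ω, d t ω - G t ω⟫ + ⟪δ t ω, G t ω⟫) ∂P
          = (∫ ω, ⟪δ t ω, d t ω - G t ω⟫ ∂P) + ∫ ω, ⟪δ t ω, G t ω⟫ ∂P :=
        integral_add (integrable_inner_of_memL2 (hδL2 t ht) ((hdL2 t ht).sub (hGL2 t ht)))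
          (integrable_inner_of_memL2 (hδL2 t ht) (hGL2 t ht))
      rw [e1, e2]
    have hδGzero : ∫ ω, ⟪δ t ω, G t ω⟫ ∂P = 0 := by
      rw [← hzero]
      exact integral_congr_ae (Filter.Eventually.of_forall fun ω => real_inner_comm _ _)
    have hbound : ∫ ω, ⟪δ t ω, d t ω - G t ω⟫ ∂P ≤ η * ∫ ω, ‖δ t ω‖ ^ 2 ∂P := by
      have e3 : ∫ ω, η * ‖δ t ω‖ ^ 2 ∂P = η * ∫ ω, ‖δ t ω‖ ^ 2 ∂P :=
        integral_const_mul η _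
      rw [← e3]
      refine integral_mono (integrable_inner_of_memL2 (hδL2 t ht)
        ((hdL2 t ht).sub (hGL2 t ht))) ((hsqint _ (hδL2 t ht)).const_mul η) fun ω => ?_
      have h1 := real_inner_le_norm (δ t ω) (d t ω - G t ω)
      have h2 := hdG t ht ω
      have h3 := norm_nonneg (δ t ω)
      have h4 := norm_nonneg (d t ω - G t ω)
      simp only
      nlinarith
    have h5 : η * ∫ ω, ‖δ t ω‖ ^ 2 ∂P ≤ η * σ ^ 2 :=
      mul_le_mul_of_nonneg_left (hvarδ t ht) hη0.le
    rw [hsplit, hδGzero]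
    linarith
  -- per-t bound on E‖G‖²
  have hEG : ∀ t, 1 ≤ t → ∫ ω, ‖G t ω‖ ^ 2 ∂P
      ≤ 2 * (∫ ω, ‖d t ω‖ ^ 2 ∂P) + 2 * η ^ 2 * σ ^ 2 := by
    intro t ht
    have hi1 := (hI_dsq t ht).const_mul 2
    have hi2 := (hsqint _ (hδL2 t ht)).const_mul (2 * η ^ 2)
    have h1 := integral_mono (hsqint _ (hGL2 t ht)) (hi1.add hi2) (fun ω => hGd t ht ω)
    have hsum : ∫ ω, (2 * ‖d t ω‖ ^ 2 + 2 * η ^ 2 * ‖δ t ω‖ ^ 2) ∂P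
        = (∫ ω, 2 * ‖d t ω‖ ^ 2 ∂P) + ∫ ω, 2 * η ^ 2 * ‖δ t ω‖ ^ 2 ∂P :=
      integral_add hi1 hi2
    have hm1 : ∫ ω, 2 * ‖d t ω‖ ^ 2 ∂P = 2 * ∫ ω, ‖d t ω‖ ^ 2 ∂P := integral_const_mul 2 _
    have hm2 : ∫ ω, 2 * η ^ 2 * ‖δ t ω‖ ^ 2 ∂P = 2 * η ^ 2 * ∫ ω, ‖δ t ω‖ ^ 2 ∂P :=
      integral_const_mul _ _
    have h2 : 2 * η ^ 2 * ∫ ω, ‖δ t ω‖ ^ 2 ∂P ≤ 2 * η ^ 2 * σ ^ 2 :=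
      mul_le_mul_of_nonneg_left (hvarδ t ht) (by positivity)
    have h1' : ∫ ω, ‖G t ω‖ ^ 2 ∂P
        ≤ (∫ ω, 2 * ‖d t ω‖ ^ 2 ∂P) + ∫ ω, 2 * η ^ 2 * ‖δ t ω‖ ^ 2 ∂P := by
      rw [← hsum]; exact h1
    rw [hm1, hm2] at h1'
    linarith
  -- telescoping master bound
  have hmaster : ∀ T : ℕ, 1 ≤ T →
      A * ∑ t ∈ Finset.Icc 1 T, ∫ ω, ‖d t ω‖ ^ 2 ∂P
        ≤ (Φ s₁ - Φstar) + T * (η * σ ^ 2) := by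
    intro T hT
    have hpt : ∀ ω, ∑ t ∈ Finset.Icc 1 T, (A * ‖d t ω‖ ^ 2 - ⟪δ t ω, d t ω⟫)
        ≤ Φ s₁ - Φstar := by
      intro ω
      have h1 : ∀ t ∈ Finset.Icc 1 T,
          A * ‖d t ω‖ ^ 2 - ⟪δ t ω, d t ω⟫ ≤ Φ (s t ω) - Φ (s (t+1) ω) := by
        intro t htmem
        have ht1 : 1 ≤ t := (Finset.mem_Icc.mp htmem).1
        linarith [hdescent t ht1 ω]
      have h2 := Finset.sum_le_sum h1
      have h3 : ∑ t ∈ Finset.Icc 1 T, (Φ (s t ω) - Φ (s (t+1) ω))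
          = Φ (s 1 ω) - Φ (s (T+1) ω) := by
        rw [← Finset.Ico_add_one_right_eq_Icc, Finset.sum_Ico_eq_sum_range]
        simp only [Nat.add_sub_cancel, Nat.succ_sub_one]
        have htel := Finset.sum_range_sub' (f := fun i => Φ (s (1+i) ω)) T
        simpa [add_comm] using htel
      rw [h3, hs1 ω] at h2
      have h4 := hbdd (s (T+1) ω)
      linarith
    have hint : Integrable
        (fun ω => ∑ t ∈ Finset.Icc 1 T, (A * ‖d t ω‖ ^ 2 - ⟪δ t ω, d t ω⟫)) P := by
      apply integrable_finset_sum
      intro t htmem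
      have ht1 : 1 ≤ t := (Finset.mem_Icc.mp htmem).1
      exact ((hI_dsq t ht1).const_mul A).sub (hIδd t ht1)
    have h4 := integral_mono hint (integrable_const (Φ s₁ - Φstar)) hpt
    rw [integral_const] at h4
    simp only [measure_univ, ENNReal.toReal_one, probReal_univ, one_smul, smul_eq_mul, one_mul] at h4
    have hIeq : ∫ ω, (∑ t ∈ Finset.Icc 1 T, (A * ‖d t ω‖ ^ 2 - ⟪δ t ω, d t ω⟫)) ∂P
        = ∑ t ∈ Finset.Icc 1 T, ∫ ω, (A * ‖d t ω‖ ^ 2 - ⟪δ t ω, d t ω⟫) ∂P :=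
      integral_finset_sum _ (fun t htmem =>
        ((hI_dsq t (Finset.mem_Icc.mp htmem).1).const_mul A).sub
          (hIδd t (Finset.mem_Icc.mp htmem).1))
    rw [hIeq] at h4
    have h5 : ∀ t ∈ Finset.Icc 1 T,
        ∫ ω, (A * ‖d t ω‖ ^ 2 - ⟪δ t ω, d t ω⟫) ∂P
          = A * (∫ ω, ‖d t ω‖ ^ 2 ∂P) - ∫ ω, ⟪δ t ω, d t ω⟫ ∂P := by
      intro t htmem
      have ht1 : 1 ≤ t := (Finset.mem_Icc.mp htmem).1
      have e1 : ∫ ω, (A * ‖d t ω‖ ^ 2 - ⟪δ t ω, d t ω⟫) ∂P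
          = (∫ ω, A * ‖d t ω‖ ^ 2 ∂P) - ∫ ω, ⟪δ t ω, d t ω⟫ ∂P :=
        integral_sub ((hI_dsq t ht1).const_mul A) (hIδd t ht1)
      rw [e1, integral_const_mul]
    rw [Finset.sum_congr rfl h5] at h4
    rw [Finset.sum_sub_distrib] at h4
    have h6 : ∑ t ∈ Finset.Icc 1 T, ∫ ω, ⟪δ t ω, d t ω⟫ ∂P ≤ T * (η * σ ^ 2) := by
      have hle : ∑ t ∈ Finset.Icc 1 T, ∫ ω, ⟪δ t ω, d t ω⟫ ∂P
          ≤ ∑ _t ∈ Finset.Icc 1 T, (η * σ ^ 2) :=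
        Finset.sum_le_sum (fun t htmem => hEδd t (Finset.mem_Icc.mp htmem).1)
      have hc : ∑ _t ∈ Finset.Icc 1 T, (η * σ ^ 2) = (T:ℝ) * (η * σ ^ 2) := by
        rw [Finset.sum_const, Nat.card_Icc, Nat.add_sub_cancel, nsmul_eq_mul]
      rw [hc] at hle
      exact hle
    rw [← Finset.mul_sum] at h4
    linarith
  -- rewrite goal integrand
  have hGoalEq : ∀ t : ℕ,
      (∫ ω, ‖η⁻¹ • (s t ω - proj (s t ω - η • gradient Φ (s t ω)))‖ ^ 2 ∂P)
        = η⁻¹ ^ 2 * ∫ ω, ‖G t ω‖ ^ 2 ∂P := by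
    intro t
    have e3 : ∫ ω, η⁻¹ ^ 2 * ‖G t ω‖ ^ 2 ∂P = η⁻¹ ^ 2 * ∫ ω, ‖G t ω‖ ^ 2 ∂P :=
      integral_const_mul _ _
    rw [← e3]
    refine integral_congr_ae (Filter.Eventually.of_forall fun ω => ?_)
    have he : s t ω - proj (s t ω - η • gradient Φ (s t ω)) = G t ω := by
      simp only [hG, hh]
    dsimp only
    rw [he, norm_smul, Real.norm_eq_abs, abs_of_pos (inv_pos.2 hη0), mul_pow]
  -- constants
  set K0 : ℝ := Φ s₁ - Φstar with hK0
  set K : ℝ := 2 * K0 / (A * η ^ 2) with hK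
  set B : ℝ := 2 * σ ^ 2 / (A * η) + 2 * σ ^ 2 with hB
  have hkey : ∀ T : ℕ, 1 ≤ T →
      (1 / (T : ℝ)) * ∑ t ∈ Finset.Icc 1 T,
        ∫ ω, ‖η⁻¹ • (s t ω - proj (s t ω - η • gradient Φ (s t ω)))‖ ^ 2 ∂P
      ≤ K / T + B := by
    intro T hT
    have hTpos : (0:ℝ) < T := by exact_mod_cast hT
    set ST : ℝ := ∑ t ∈ Finset.Icc 1 T, ∫ ω, ‖d t ω‖ ^ 2 ∂P with hSTdef
    have hST0 : 0 ≤ ST := by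
      rw [hSTdef]
      exact Finset.sum_nonneg fun t _ => integral_nonneg fun ω => by positivity
    have hS1 : A * ST ≤ K0 + T * (η * σ ^ 2) := hmaster T hT
    have hsum1 : (∑ t ∈ Finset.Icc 1 T,
        ∫ ω, ‖η⁻¹ • (s t ω - proj (s t ω - η • gradient Φ (s t ω)))‖ ^ 2 ∂P)
        ≤ η⁻¹ ^ 2 * (2 * ST + T * (2 * η ^ 2 * σ ^ 2)) := by
      calc (∑ t ∈ Finset.Icc 1 T,
            ∫ ω, ‖η⁻¹ • (s t ω - proj (s t ω - η • gradient Φ (s t ω)))‖ ^ 2 ∂P)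
          = ∑ t ∈ Finset.Icc 1 T, η⁻¹ ^ 2 * ∫ ω, ‖G t ω‖ ^ 2 ∂P :=
            Finset.sum_congr rfl fun t _ => hGoalEq t
        _ ≤ ∑ t ∈ Finset.Icc 1 T, η⁻¹ ^ 2 * (2 * (∫ ω, ‖d t ω‖ ^ 2 ∂P) + 2 * η ^ 2 * σ ^ 2) :=
            Finset.sum_le_sum fun t htm => mul_le_mul_of_nonneg_left
              (hEG t (Finset.mem_Icc.mp htm).1) (by positivity)
        _ = η⁻¹ ^ 2 * ∑ t ∈ Finset.Icc 1 T,
              (2 * (∫ ω, ‖d t ω‖ ^ 2 ∂P) + 2 * η ^ 2 * σ ^ 2) := by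
            rw [Finset.mul_sum]
        _ = η⁻¹ ^ 2 * (2 * ST + T * (2 * η ^ 2 * σ ^ 2)) := by
            rw [Finset.sum_add_distrib, Finset.sum_const, ← Finset.mul_sum,
              Nat.card_Icc, Nat.add_sub_cancel, nsmul_eq_mul, hSTdef]
    have hSTle : ST ≤ (K0 + T * (η * σ ^ 2)) / A := by
      rw [le_div_iff₀ hApos]
      linarith [hS1]
    calc (1 / (T : ℝ)) * ∑ t ∈ Finset.Icc 1 T,
          ∫ ω, ‖η⁻¹ • (s t ω - proj (s t ω - η • gradient Φ (s t ω)))‖ ^ 2 ∂P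
        ≤ (1 / (T : ℝ)) * (η⁻¹ ^ 2 * (2 * ST + T * (2 * η ^ 2 * σ ^ 2))) :=
          mul_le_mul_of_nonneg_left hsum1 (by positivity)
      _ ≤ (1 / (T : ℝ)) * (η⁻¹ ^ 2 * (2 * ((K0 + T * (η * σ ^ 2)) / A)
            + T * (2 * η ^ 2 * σ ^ 2))) := by
          refine mul_le_mul_of_nonneg_left ?_ (by positivity)
          refine mul_le_mul_of_nonneg_left ?_ (by positivity)
          linarith [hSTle]
      _ = K / T + B := by
          rw [hK, hB]
          field_simp
          ring
  -- limsup step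
  have hevent : ∀ᶠ T : ℕ in Filter.atTop, (1 / (T : ℝ)) * (∑ t ∈ Finset.Icc 1 T,
      ∫ ω, ‖η⁻¹ • (s t ω - proj (s t ω - η • gradient Φ (s t ω)))‖ ^ 2 ∂P)
      ≤ K / (T : ℝ) + B :=
    Filter.eventually_atTop.2 ⟨1, hkey⟩
  have htendB : Filter.Tendsto (fun T : ℕ => K / (T : ℝ) + B) Filter.atTop (nhds B) := by
    have h0 := (tendsto_const_div_atTop_nhds_zero_nat K).add
      (tendsto_const_nhds :
        Filter.Tendsto (fun _ : ℕ => B) Filter.atTop (nhds B))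
    simpa using h0
  have hnn : ∀ T : ℕ, 0 ≤ (1 / (T : ℝ)) * ∑ t ∈ Finset.Icc 1 T,
      ∫ ω, ‖η⁻¹ • (s t ω - proj (s t ω - η • gradient Φ (s t ω)))‖ ^ 2 ∂P := by
    intro T
    refine mul_nonneg (by positivity) (Finset.sum_nonneg fun t _ => ?_)
    exact integral_nonneg fun ω => by positivity
  have hcob : Filter.IsCoboundedUnder (· ≤ ·) Filter.atTop (fun T : ℕ =>
      (1 / (T : ℝ)) * ∑ t ∈ Finset.Icc 1 T,
        ∫ ω, ‖η⁻¹ • (s t ω - proj (s t ω - η • gradient Φ (s t ω)))‖ ^ 2 ∂P) := by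
    refine Filter.IsBoundedUnder.isCoboundedUnder_le ?_
    exact Filter.isBoundedUnder_of ⟨0, fun T => hnn T⟩
  have hlim := Filter.limsup_le_limsup hevent hcob htendB.isBoundedUnder_le
  rw [htendB.limsup_eq] at hlim
  have hBeq : B = ((8 - 2 * L * η) / (2 - L * η)) * σ ^ 2 := by
    have h2Lη : (0:ℝ) < 2 - L * η := by linarith
    have hAη : A * η = (2 - L * η) / 2 := by
      rw [hA]; field_simp
    rw [hB, hAη, div_div_eq_mul_div]
    field_simp [ne_of_gt h2Lη]
    ring
  rw [← hBeq]
  exact hlim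


end Main

/-- Asymptotic convergence of projected SGD (Property 1 / Theorem A.1):
`limsup_{T→∞} (1/T) Σ_{t=1}^{T} E‖G^t‖² ≤ ((8 − 2Lη)/(2 − Lη)) σ²`,
where `G^t = (s^t − P_C(s^t − η ∇Φ(s^t)))/η`. -/
theorem psgd_limsup_gradient_mapping_bound
    {E : Type*} [NormedAddCommGroup E] [InnerProductSpace ℝ E] [FiniteDimensional ℝ E]
    {Ω : Type*} {mΩ : MeasurableSpace Ω} (P : Measure Ω) [IsProbabilityMeasure P]
    (ℱ : Filtration ℕ mΩ)
    (C : Set E) (hCne : C.Nonempty) (hCcl : IsClosed C) (hCco : Convex ℝ C)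
    (proj : E → E)
    (hprojC : ∀ x, proj x ∈ C) (hproj : ∀ x, ∀ c ∈ C, ‖x - proj x‖ ≤ ‖x - c‖)
    (Φ : E → ℝ) (L Φstar : ℝ) (hΦ : Differentiable ℝ Φ)
    (hLip : ∀ x y, ‖gradient Φ x - gradient Φ y‖ ≤ L * ‖x - y‖)
    (hbdd : ∀ x, Φstar ≤ Φ x)
    (η : ℝ) (hL : 0 < L) (hη0 : 0 < η) (hηL : η < 1 / L)
    (σ : ℝ)
    (s g : ℕ → Ω → E)
    (hsmeas : ∀ t, StronglyMeasurable[ℱ t] (s t))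
    (hsC : ∀ t ω, s t ω ∈ C)
    (hgmeas : ∀ t, StronglyMeasurable[ℱ (t + 1)] (g t))
    (hgL2 : ∀ t, MemLp (g t) 2 P)
    (hupdate : ∀ t, 1 ≤ t → ∀ ω, s (t + 1) ω = proj (s t ω - η • g t ω))
    (hcond : ∀ t, 1 ≤ t → P[g t|ℱ t] =ᵐ[P] fun ω => gradient Φ (s t ω))
    (hvar : ∀ t, 1 ≤ t → ∫ ω, ‖g t ω - gradient Φ (s t ω)‖ ^ 2 ∂P ≤ σ ^ 2)
    (s₁ : E) (hs1 : ∀ ω, s 1 ω = s₁) :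
    Filter.limsup
        (fun T : ℕ =>
          (1 / (T : ℝ)) *
            ∑ t ∈ Finset.Icc 1 T,
              ∫ ω, ‖η⁻¹ • (s t ω - proj (s t ω - η • gradient Φ (s t ω)))‖ ^ 2 ∂P)
        Filter.atTop
      ≤ ((8 - 2 * L * η) / (2 - L * η)) * σ ^ 2 :=
  psgd_limsup_aux P ℱ C hCne hCcl hCco proj hprojC hproj Φ L Φstar hΦ hLip hbdd
    η hL hη0 hηL σ s g hsmeas hsC hgmeas hgL2 hupdate hcond hvar s₁ hs1
end

section
/- Fix n, K > 0, and z ∈ ℝ^n. Let C_K = {s ∈ ℝ^n : 0 ≤ s_i ≤ 1 for all i, Σ_i s_i ≤ K}, and suppose v* ≥ 0 satisfies either (v* = 0 and Σ_i min(1, max(0, z_i)) ≤ K) or Σ_i min(1, max(0, z_i − v*)) = K. Then the vector s* with coordinates s*_i = min(1, max(0, z_i − v*)) is the Euclidean projection of z onto C_K: s* ∈ C_K and ‖z − s*‖ ≤ ‖z − c‖ for every c ∈ C_K. -/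
lemma clip_key (zi v ci : ℝ) (hv : 0 ≤ v) (hc0 : 0 ≤ ci) (hc1 : ci ≤ 1) :
    (zi - min 1 (max 0 (zi - v))) * (ci - min 1 (max 0 (zi - v)))
      ≤ v * (ci - min 1 (max 0 (zi - v))) := by
  rcases le_total (zi - v) 0 with h | h
  · rw [max_eq_left h, min_eq_right (by linarith : (0:ℝ) ≤ 1)]
    nlinarith
  · rw [max_eq_right h]
    rcases le_total (zi - v) 1 with h1 | h1
    · rw [min_eq_right h1]
      nlinarith
    · rw [min_eq_left h1]
      nlinarith

/-- Correctness of the bisection-based projection onto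
`C_K = {s : 0 ≤ s_i ≤ 1, Σ_i s_i ≤ K}`: if `v* ≥ 0` satisfies the optimality condition
(either `v* = 0` and the clipped vector is already feasible, or the clipped sum equals
`K`), then the vector `s*` with coordinates `s*_i = min(1, max(0, z_i − v*))` is the
Euclidean projection of `z` onto `C_K`. -/
theorem projection_onto_capped_simplex
    (n : ℕ) (K : ℝ) (hK : 0 < K) (z : EuclideanSpace ℝ (Fin n)) (v : ℝ) (hv : 0 ≤ v)
    (hopt : (v = 0 ∧ ∑ i, min 1 (max 0 (z i)) ≤ K)
        ∨ ∑ i, min 1 (max 0 (z i - v)) = K)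
    (sstar : EuclideanSpace ℝ (Fin n))
    (hsstar : ∀ i, sstar i = min 1 (max 0 (z i - v))) :
    (sstar ∈ {s : EuclideanSpace ℝ (Fin n) | (∀ i, 0 ≤ s i ∧ s i ≤ 1) ∧ ∑ i, s i ≤ K}) ∧
      ∀ c ∈ {s : EuclideanSpace ℝ (Fin n) | (∀ i, 0 ≤ s i ∧ s i ≤ 1) ∧ ∑ i, s i ≤ K},
        ‖z - sstar‖ ≤ ‖z - c‖ := by
  have hbounds : ∀ i, 0 ≤ sstar i ∧ sstar i ≤ 1 := by
    intro i
    rw [hsstar i]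
    constructor
    · exact le_min (by norm_num) (le_max_left _ _)
    · exact min_le_left _ _
  have hsum : ∑ i, sstar i ≤ K := by
    rcases hopt with ⟨hv0, hle⟩ | heq
    · simp only [hsstar, hv0, sub_zero]
      exact hle
    · simp only [hsstar]
      exact le_of_eq heq
  refine ⟨⟨hbounds, hsum⟩, ?_⟩
  intro c hc
  obtain ⟨hcb, hcsum⟩ := hc
  -- key inner product inequality
  have hkey : ∑ i, (z i - sstar i) * (c i - sstar i) ≤ 0 := by
    have h1 : ∑ i, (z i - sstar i) * (c i - sstar i)
        ≤ ∑ i, v * (c i - sstar i) := by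
      apply Finset.sum_le_sum
      intro i _
      rw [hsstar i]
      exact clip_key (z i) v (c i) hv (hcb i).1 (hcb i).2
    have h2 : ∑ i, v * (c i - sstar i) = v * (∑ i, c i - ∑ i, sstar i) := by
      rw [← Finset.mul_sum, Finset.sum_sub_distrib]
    rcases hopt with ⟨hv0, _⟩ | heq
    · calc _ ≤ ∑ i, v * (c i - sstar i) := h1
        _ = 0 := by simp [hv0]
    · have hs : ∑ i, sstar i = K := by simp only [hsstar]; exact heq
      have : v * (∑ i, c i - ∑ i, sstar i) ≤ 0 := by
        apply mul_nonpos_of_nonneg_of_nonpos hv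
        rw [hs]; linarith
      linarith [h1, h2.symm ▸ this]
  -- conclude via sums of squares
  have hsq : ∑ i, (z i - sstar i) ^ 2 ≤ ∑ i, (z i - c i) ^ 2 := by
    have : ∑ i, (z i - c i) ^ 2
        = ∑ i, ((z i - sstar i) ^ 2 - 2 * ((z i - sstar i) * (c i - sstar i))
            + (c i - sstar i) ^ 2) := by
      apply Finset.sum_congr rfl
      intro i _
      ring
    rw [this, Finset.sum_add_distrib, Finset.sum_sub_distrib, ← Finset.mul_sum]
    have hnn : 0 ≤ ∑ i, (c i - sstar i) ^ 2 :=
      Finset.sum_nonneg fun i _ => sq_nonneg _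
    linarith
  rw [EuclideanSpace.norm_eq, EuclideanSpace.norm_eq]
  apply Real.sqrt_le_sqrt
  simpa [sq_abs] using hsq
end
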